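/- arXiv:1302.0402 — 6 statements merged into one kernel-verified Lean document; each statement's English description precedes it below -/
import Mathlib

section
/- Let ν be a positive Radon measure on (0,∞) with ∫_{(0,∞)} (1+r)^{−1} ν(dr) < ∞, and define β(p) = p ∫_{(0,∞)} (p+r)^{−1} ν(dr) for complex p with Re p ≥ 0, p ≠ 0. Then for every fixed φ ∈ [−π/2, π/2], the function R ↦ Re β(R e^{iφ}) is non-decreasing on (0,∞). -/
open MeasureTheory Set Real

/-- For the dispersion-attenuation function
`β(p) = p ∫_{(0,∞)} (p+r)⁻¹ ν(dr)` of a positive Radon measure `ν` on `(0,∞)` with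
`∫ (1+r)⁻¹ ν(dr) < ∞`, and every fixed `φ ∈ [-π/2, π/2]`, the function
`R ↦ Re β(R e^{iφ})` is non-decreasing on `(0,∞)`. -/
theorem stmt6 (ν : Measure ℝ)
    (hν : (∫⁻ r in Ioi (0:ℝ), ENNReal.ofReal ((1 + r)⁻¹) ∂ν) < ⊤)
    (β : ℂ → ℂ)
    (hβ : ∀ p : ℂ, β p = p * ∫ r in Ioi (0:ℝ), (p + (r : ℂ))⁻¹ ∂ν)
    (φ : ℝ) (hφ : φ ∈ Icc (-(π / 2)) (π / 2)) :
    MonotoneOn (fun R : ℝ => (β ((R : ℂ) * Complex.exp (φ * Complex.I))).re) (Ioi 0) := by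
  have hc : 0 ≤ Real.cos φ := Real.cos_nonneg_of_mem_Icc hφ
  set c := Real.cos φ with hcdef
  set s := Real.sin φ with hsdef
  have hcs : s ^ 2 + c ^ 2 = 1 := Real.sin_sq_add_cos_sq φ
  set μ := ν.restrict (Ioi (0:ℝ)) with hμ
  -- integrability of (1+r)⁻¹
  have hg : Integrable (fun r : ℝ => (1 + r)⁻¹) μ := by
    constructor
    · exact ((measurable_const.add measurable_id).inv).aestronglyMeasurable
    · rw [hasFiniteIntegral_iff_norm]
      have : ∫⁻ r, ENNReal.ofReal ‖(1 + r)⁻¹‖ ∂μ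
          = ∫⁻ r in Ioi (0:ℝ), ENNReal.ofReal ((1 + r)⁻¹) ∂ν := by
        apply setLIntegral_congr_fun measurableSet_Ioi
        intro r hr; dsimp only
        have h0 : (0:ℝ) < r := hr
        rw [Real.norm_eq_abs, abs_of_nonneg (by rw [inv_nonneg]; linarith)]
      rw [this]; exact hν
  -- notation for p
  set P : ℝ → ℂ := fun R => (R : ℂ) * Complex.exp (φ * Complex.I) with hP
  have hre : ∀ R r : ℝ, (P R + r).re = R * c + r := by
    intro R r; simp [hP, Complex.exp_mul_I, Complex.cos_ofReal_re, Complex.sin_ofReal_re, hcdef]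
  have him : ∀ R r : ℝ, (P R + r).im = R * s := by
    intro R r; simp [hP, Complex.exp_mul_I, Complex.cos_ofReal_re, Complex.sin_ofReal_re, hsdef]
  have hnormSq : ∀ R r : ℝ, Complex.normSq (P R + r) = R^2 + 2*c*R*r + r^2 := by
    intro R r
    rw [Complex.normSq_apply, hre, him]
    nlinarith [hcs]
  -- integrability of the complex integrand
  have hint : ∀ R : ℝ, 0 < R → Integrable (fun r : ℝ => (P R + r)⁻¹) μ := by
    intro R hR
    have hm : 0 < min R 1 := lt_min hR one_pos
    apply Integrable.mono' ((hg.const_mul (2 * (min R 1)⁻¹)))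
    · exact ((measurable_const.add Complex.measurable_ofReal).inv).aestronglyMeasurable
    · filter_upwards [ae_restrict_mem measurableSet_Ioi] with r hr
      have hr0 : 0 < r := hr
      have hA2 : (‖P R + r‖)^2 = R^2 + 2*c*R*r + r^2 := by
        rw [Complex.sq_norm, hnormSq]
      have hcRr : 0 ≤ c * (R * r) := mul_nonneg hc (mul_pos hR hr0).le
      have hA : 0 < ‖P R + r‖ := by
        nlinarith [norm_nonneg (P R + r), pow_pos hR 2, pow_pos hr0 2]
      have h3 : (R + r)^2 ≤ (2 * ‖P R + r‖)^2 := by nlinarith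
      have h4 : R + r ≤ 2 * ‖P R + r‖ := by nlinarith [h3, hA.le]
      have key : min R 1 * (1 + r) ≤ 2 * ‖P R + r‖ := by
        have := mul_le_mul_of_nonneg_right (min_le_right R 1) hr0.le
        have := min_le_left R 1
        linarith
      rw [norm_inv]
      have h1 : (‖P R + r‖)⁻¹ = 1 / ‖P R + r‖ := by
        rw [one_div]
      have h2 : 2 * (min R 1)⁻¹ * (1 + r)⁻¹ = 2 / (min R 1 * (1 + r)) := by
        field_simp
      rw [h1, h2, div_le_div_iff₀ hA (by positivity)]
      linarith
  -- the real integrand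
  set F : ℝ → ℝ → ℝ := fun R r => (R^2 + c*R*r) / (R^2 + 2*c*R*r + r^2) with hF
  have hptwise : ∀ R : ℝ, 0 < R → ∀ r : ℝ, 0 < r →
      (P R * (P R + r)⁻¹).re = F R r := by
    intro R hR r hr
    have hN : Complex.normSq (P R + r) = R^2 + 2*c*R*r + r^2 := hnormSq R r
    have hzre : (P R).re = R * c := by
      have := hre R 0; simpa using this
    have hzim : (P R).im = R * s := by
      have := him R 0; simpa using this
    rw [← div_eq_mul_inv, Complex.div_re, hN, hre, him, hzre, hzim, ← add_div, hF]
    congr 1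
    nlinarith [hcs]
  -- the formula for Re β
  have hkey : ∀ R : ℝ, 0 < R →
      (β (P R)).re = ∫ r, F R r ∂μ := by
    intro R hR
    rw [hβ, ← MeasureTheory.integral_const_mul]
    have h1 : (∫ r in Ioi (0:ℝ), P R * (P R + r)⁻¹ ∂ν).re
        = ∫ r, (P R * (P R + r)⁻¹).re ∂μ := by
      have := integral_re ((hint R hR).const_mul (P R))
      simpa [RCLike.re_to_complex] using this.symm
    rw [h1]
    apply integral_congr_ae
    filter_upwards [ae_restrict_mem measurableSet_Ioi] with r hr
    exact hptwise R hR r hr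
  have hFint : ∀ R : ℝ, 0 < R → Integrable (F R) μ := by
    intro R hR
    apply (Integrable.re ((hint R hR).const_mul (P R))).congr
    filter_upwards [ae_restrict_mem measurableSet_Ioi] with r hr
    exact hptwise R hR r hr
  -- monotonicity
  intro R1 hR1 R2 hR2 h12
  simp only
  rw [hkey R1 hR1, hkey R2 hR2]
  apply integral_mono_ae (hFint R1 hR1) (hFint R2 hR2)
  filter_upwards [ae_restrict_mem measurableSet_Ioi] with r hr
  have hr0 : (0:ℝ) < r := hr
  have hR1' : (0:ℝ) < R1 := hR1
  rw [hF]
  have hR2' : (0:ℝ) < R2 := hR2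
  have hd1 : 0 < R1^2 + 2*c*R1*r + r^2 := by
    nlinarith [pow_pos hR1' 2, pow_pos hr0 2, mul_nonneg hc (mul_pos hR1' hr0).le]
  have hd2 : 0 < R2^2 + 2*c*R2*r + r^2 := by
    nlinarith [pow_pos hR2' 2, pow_pos hr0 2, mul_nonneg hc (mul_pos hR2' hr0).le]
  rw [div_le_div_iff₀ hd1 hd2]
  have h12' : (0:ℝ) ≤ R2 - R1 := by linarith
  nlinarith [mul_nonneg h12' (mul_nonneg (mul_nonneg (mul_nonneg hc hR1'.le) hR2'.le) hr0.le),
    mul_nonneg h12' (mul_nonneg (sq_nonneg r) (by linarith : (0:ℝ) ≤ R1 + R2)),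
    mul_nonneg h12' (mul_nonneg hc (pow_nonneg hr0.le 3))]
end

section
/- Let ν be a positive Radon measure on (0,∞) with ∫_{(0,∞)} (1+r)^{−1} ν(dr) < ∞, and define β(p) = p ∫_{(0,∞)} (p+r)^{−1} ν(dr) for complex p with Re p ≥ 0, p ≠ 0. If ν((0,∞)) = ∞, then Re β(p) → ∞ as |p| → ∞ in the closed right half-plane; that is, for every M > 0 there exists R > 0 such that Re β(p) ≥ M whenever Re p ≥ 0 and |p| ≥ R. -/
open MeasureTheory Set

private lemma inv_abs_bound (p : ℂ) (hx : 0 ≤ p.re) (hp : 1 ≤ ‖p‖)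
    {r : ℝ} (hr : 0 < r) :
    ‖(p + (r:ℂ))⁻¹‖ ≤ Real.sqrt 2 * (1 + r)⁻¹ := by
  have h1r : (0:ℝ) < 1 + r := by linarith
  have habs2 : 1 ≤ Complex.normSq p := by
    have h := Complex.sq_norm p
    nlinarith [norm_nonneg p]
  have hns : Complex.normSq p = p.re^2 + p.im^2 := by simp [Complex.normSq_apply]; ring
  have hnormSq : ((1+r)/Real.sqrt 2)^2 ≤ Complex.normSq (p + r) := by
    have h2 : Complex.normSq (p + r) = (p.re + r)^2 + p.im^2 := by
      simp [Complex.normSq_apply]; ring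
    rw [h2, div_pow, Real.sq_sqrt (by norm_num : (0:ℝ) ≤ 2)]
    rw [hns] at habs2
    nlinarith [mul_nonneg hx hr.le, sq_nonneg (1-r)]
  have hle : (1+r)/Real.sqrt 2 ≤ ‖p + r‖ := by
    have h3 := Real.sqrt_le_sqrt hnormSq
    rwa [Real.sqrt_sq (by positivity), ← Complex.norm_def] at h3
  have hpos : (0:ℝ) < (1+r)/Real.sqrt 2 := by positivity
  rw [norm_inv]
  calc ‖p + r‖⁻¹ ≤ ((1+r)/Real.sqrt 2)⁻¹ := inv_anti₀ hpos hle
    _ = Real.sqrt 2 * (1+r)⁻¹ := by field_simp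

private lemma re_formula (p : ℂ) (hx : 0 ≤ p.re) {r : ℝ} (hr : 0 < r) :
    (p * (p + (r:ℂ))⁻¹).re
      = (p.re * (p.re + r) + p.im * p.im) / Complex.normSq (p + r) := by
  rw [mul_comm, ← div_eq_inv_mul, Complex.div_re]
  simp [Complex.add_re, Complex.add_im]
  ring

private lemma re_nonneg (p : ℂ) (hx : 0 ≤ p.re) {r : ℝ} (hr : 0 < r) :
    0 ≤ (p * (p + (r:ℂ))⁻¹).re := by
  rw [re_formula p hx hr]
  have h1 : 0 ≤ p.re * (p.re + r) + p.im * p.im := by nlinarith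
  exact div_nonneg h1 (Complex.normSq_nonneg _)

private lemma re_ge (p : ℂ) (hx : 0 ≤ p.re) {r : ℝ} (hr : 0 < r)
    (hrp : r ≤ ‖p‖) : 1/4 ≤ (p * (p + (r:ℂ))⁻¹).re := by
  have hr2 : r^2 ≤ p.re^2 + p.im^2 := by
    have h := Complex.sq_norm p
    have hns : Complex.normSq p = p.re^2 + p.im^2 := by simp [Complex.normSq_apply]; ring
    nlinarith
  rw [re_formula p hx hr]
  have hD : Complex.normSq (p + r) = (p.re + r)^2 + p.im^2 := by
    simp [Complex.normSq_apply]; ring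
  rw [hD]
  have hDpos : (0:ℝ) < (p.re + r)^2 + p.im^2 := by positivity
  rw [le_div_iff₀ hDpos]
  nlinarith [mul_nonneg hx hr.le]

private lemma g_integrable (ν : Measure ℝ)
    (hν : (∫⁻ r in Ioi (0:ℝ), ENNReal.ofReal ((1 + r)⁻¹) ∂ν) < ⊤) :
    Integrable (fun r : ℝ => (1 + r)⁻¹) (ν.restrict (Ioi 0)) := by
  refine ⟨((measurable_const.add measurable_id).inv).aestronglyMeasurable, ?_⟩
  rw [hasFiniteIntegral_iff_ofReal ?_]
  · simpa using hν
  · filter_upwards [ae_restrict_mem measurableSet_Ioi] with r hr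
    have : (0:ℝ) < 1 + r := by have := mem_Ioi.mp hr; linarith
    positivity

private lemma f_integrable (ν : Measure ℝ)
    (hν : (∫⁻ r in Ioi (0:ℝ), ENNReal.ofReal ((1 + r)⁻¹) ∂ν) < ⊤)
    (p : ℂ) (hx : 0 ≤ p.re) (hp : 1 ≤ ‖p‖) :
    Integrable (fun r : ℝ => p * (p + (r:ℂ))⁻¹) (ν.restrict (Ioi 0)) := by
  refine Integrable.mono' (((g_integrable ν hν).const_mul (‖p‖ * Real.sqrt 2)))
    ?_ ?_
  · exact (((measurable_const.add Complex.measurable_ofReal).inv).const_mul p).aestronglyMeasurable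
  · filter_upwards [ae_restrict_mem measurableSet_Ioi] with r hr
    have hr0 : (0:ℝ) < r := mem_Ioi.mp hr
    have := inv_abs_bound p hx hp hr0
    have habs : ‖p * (p + (r:ℂ))⁻¹‖ = ‖p‖ * ‖(p + (r:ℂ))⁻¹‖ := by
      simp
    rw [habs, mul_assoc]
    exact mul_le_mul_of_nonneg_left this (norm_nonneg p)

/-- For the dispersion-attenuation function
`β(p) = p ∫_{(0,∞)} (p+r)⁻¹ ν(dr)` of a positive Radon measure `ν` on `(0,∞)` with
`∫ (1+r)⁻¹ ν(dr) < ∞`: if `ν((0,∞)) = ∞` then `Re β(p) → ∞` as `|p| → ∞` in the closed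
right half-plane. -/
theorem stmt7 (ν : Measure ℝ)
    (hν : (∫⁻ r in Ioi (0:ℝ), ENNReal.ofReal ((1 + r)⁻¹) ∂ν) < ⊤)
    (β : ℂ → ℂ)
    (hβ : ∀ p : ℂ, β p = p * ∫ r in Ioi (0:ℝ), (p + (r : ℂ))⁻¹ ∂ν)
    (hinf : ν (Ioi (0:ℝ)) = ⊤) :
    ∀ M > (0:ℝ), ∃ R > (0:ℝ), ∀ p : ℂ, 0 ≤ p.re → R ≤ ‖p‖ →
      M ≤ (β p).re := by
  intro M hM
  -- find a cutoff T with large finite mass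
  have hU : (⋃ n : ℕ, Ioc (0:ℝ) n) = Ioi 0 := by
    ext x
    simp only [mem_iUnion, mem_Ioc, mem_Ioi]
    constructor
    · rintro ⟨n, h, _⟩; exact h
    · intro h; exact ⟨⌈x⌉₊, h, Nat.le_ceil x⟩
  have hmono : Monotone (fun n : ℕ => Ioc (0:ℝ) n) := fun m n hmn =>
    Ioc_subset_Ioc_right (by exact_mod_cast hmn)
  have htend := tendsto_measure_iUnion_atTop (μ := ν) hmono
  rw [hU, hinf] at htend
  have hev : ∀ᶠ n : ℕ in Filter.atTop, ENNReal.ofReal (4*M) < ν (Ioc (0:ℝ) n) :=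
    htend.eventually (eventually_gt_nhds (by exact ENNReal.ofReal_lt_top))
  obtain ⟨n, hn⟩ := hev.exists
  set T : ℝ := (n : ℝ) with hT
  -- finiteness of the mass of (0, T]
  have hfin : ν (Ioc (0:ℝ) T) ≠ ⊤ := by
    intro htop
    have hsub : Ioc (0:ℝ) T ⊆ Ioi 0 := fun x hx => hx.1
    have h1 : ENNReal.ofReal ((1+T)⁻¹) * ν (Ioc (0:ℝ) T)
        ≤ ∫⁻ r in Ioc (0:ℝ) T, ENNReal.ofReal ((1 + r)⁻¹) ∂ν := by
      rw [← setLIntegral_const]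
      refine setLIntegral_mono' measurableSet_Ioc fun r hr => ?_
      refine ENNReal.ofReal_le_ofReal ?_
      have h0 : (0:ℝ) < 1 + r := by have := hr.1; linarith
      have h1 : (0:ℝ) < 1 + T := by have := hr.1.trans_le hr.2; linarith
      exact inv_anti₀ h0 (by linarith [hr.2])
    have h2 : (∫⁻ r in Ioc (0:ℝ) T, ENNReal.ofReal ((1 + r)⁻¹) ∂ν)
        ≤ ∫⁻ r in Ioi (0:ℝ), ENNReal.ofReal ((1 + r)⁻¹) ∂ν :=
      lintegral_mono_set hsub
    have hTpos : (0:ℝ) < (1+T)⁻¹ := by positivity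
    rw [htop, ENNReal.mul_top (by simp [ENNReal.ofReal_eq_zero, not_le]; positivity)] at h1
    exact absurd hν (not_lt.mpr (h1.trans h2))
  
  have h4M : 4*M ≤ (ν (Ioc (0:ℝ) T)).toReal :=
    (ENNReal.ofReal_le_iff_le_toReal hfin).mp hn.le
  refine ⟨max T 1, lt_of_lt_of_le zero_lt_one (le_max_right T 1), ?_⟩
  intro p hx hR
  have hp1 : 1 ≤ ‖p‖ := le_trans (le_max_right T 1) hR
  have hpT : T ≤ ‖p‖ := le_trans (le_max_left T 1) hR
  have hf := f_integrable ν hν p hx hp1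
  have hβre : (β p).re = ∫ r in Ioi (0:ℝ), (p * (p + (r:ℂ))⁻¹).re ∂ν := by
    rw [hβ, ← integral_const_mul]
    have := integral_re hf
    simpa using this.symm
  calc M = (1/4 : ℝ) * (4*M) := by ring
    _ ≤ (1/4 : ℝ) * (ν (Ioc (0:ℝ) T)).toReal := by
        have : (0:ℝ) ≤ 1/4 := by norm_num
        exact mul_le_mul_of_nonneg_left h4M this
    _ ≤ ∫ r in Ioc (0:ℝ) T, (p * (p+(r:ℂ))⁻¹).re ∂ν := by
        refine setIntegral_ge_of_const_le_real measurableSet_Ioc hfin ?_ ?_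
        · intro y hy; exact re_ge p hx hy.1 (hy.2.trans hpT)
        · have hfre : IntegrableOn (fun r : ℝ => (p * (p+(r:ℂ))⁻¹).re) (Ioi 0) ν := by
            exact hf.re
          exact hfre.mono_set (fun y hy => hy.1)
    _ ≤ ∫ r in Ioi (0:ℝ), (p * (p+(r:ℂ))⁻¹).re ∂ν := by
        have hfre : IntegrableOn (fun r : ℝ => (p * (p+(r:ℂ))⁻¹).re) (Ioi 0) ν := by
          exact hf.re
        refine setIntegral_mono_set hfre ?_
          (HasSubset.Subset.eventuallyLE (fun y hy => hy.1))
        filter_upwards [ae_restrict_mem measurableSet_Ioi] with r hr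
        exact re_nonneg p hx (mem_Ioi.mp hr)
    _ = (β p).re := hβre.symm
end

section
/- Let ρ > 0, let μ be a nonzero positive Radon measure on [0,∞) with ∫_{[0,∞)} (1+r)^{−1} μ(dr) < ∞, and define Q(p) = p ∫_{[0,∞)} (p+r)^{−1} μ(dr) and κ(p) = ρ^{1/2} p / Q(p)^{1/2} for complex p with Re p ≥ 0, p ≠ 0, where the square root is the principal branch. Set G₀ = μ([0,∞)) ∈ (0,∞]. Then κ(p)/p → (ρ/G₀)^{1/2} as |p| → ∞ in the closed right half-plane (with the limit equal to 0 when G₀ = ∞), uniformly with respect to arg p ∈ [−π/2, π/2]. -/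
open MeasureTheory Set
open scoped ENNReal NNReal

namespace Stmt9Aux


lemma abs_le_abs_add {p : ℂ} (hp : 0 ≤ p.re) {r : ℝ} (hr : 0 ≤ r) :
    ‖p‖ ≤ ‖p + r‖ := by
  rw [Complex.norm_def, Complex.norm_def, Complex.normSq_apply, Complex.normSq_apply]
  apply Real.sqrt_le_sqrt
  simp only [Complex.add_re, Complex.add_im, Complex.ofReal_re, Complex.ofReal_im, add_zero]
  nlinarith

lemma le_abs_add {p : ℂ} (hp : 0 ≤ p.re) {r : ℝ} (hr : 0 ≤ r) :
    r ≤ ‖p + r‖ := by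
  have h : r * r ≤ Complex.normSq (p + r) := by
    simp only [Complex.normSq_apply, Complex.add_re, Complex.add_im, Complex.ofReal_re,
      Complex.ofReal_im, add_zero]
    nlinarith
  calc r = Real.sqrt (r * r) := (Real.sqrt_mul_self hr).symm
    _ ≤ Real.sqrt (Complex.normSq (p + r)) := Real.sqrt_le_sqrt h
    _ = ‖p + r‖ := (Complex.norm_def _).symm

lemma add_ne_zero {p : ℂ} (hp : 0 ≤ p.re) (hp0 : p ≠ 0) {r : ℝ} (hr : 0 ≤ r) :
    p + (r : ℂ) ≠ 0 := by
  have h1 : 0 < ‖p‖ := by simpa using hp0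
  have h2 := abs_le_abs_add hp hr
  intro h
  rw [h] at h2
  simp at h2
  exact hp0 h2

lemma sq_half (z : ℂ) : (z ^ ((1:ℂ)/2)) ^ 2 = z := by
  have := Complex.cpow_nat_inv_pow z (two_ne_zero)
  norm_num at this
  exact this

lemma abs_half (z : ℂ) : ‖z ^ ((1:ℂ)/2)‖ = Real.sqrt (‖z‖) := by
  have h : ‖(z ^ ((1:ℂ)/2)) ^ 2‖ = ‖z‖ := by rw [sq_half]
  rw [norm_pow] at h
  rw [← h, Real.sqrt_sq (norm_nonneg _)]

lemma re_half_nonneg (z : ℂ) : 0 ≤ (z ^ ((1:ℂ)/2)).re := by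
  rcases eq_or_ne z 0 with h | h
  · simp [h, Complex.zero_cpow (by norm_num : (1:ℂ)/2 ≠ 0)]
  · rw [Complex.cpow_def_of_ne_zero h, Complex.exp_re]
    apply mul_nonneg (Real.exp_nonneg _)
    have him : (Complex.log z * ((1:ℂ)/2)).im = z.arg / 2 := by
      simp [Complex.mul_im, Complex.log_im]
      ring
    rw [him]
    apply Real.cos_nonneg_of_mem_Icc
    constructor
    · have := Complex.neg_pi_lt_arg z
      linarith
    · have := Complex.arg_le_pi z
      linarith



lemma meas_inv (p : ℂ) : Measurable (fun r : ℝ => (p + (r : ℂ))⁻¹) :=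
  (measurable_const.add Complex.measurable_ofReal).inv

lemma integrable_bound (μ : Measure ℝ)
    (hμ : (∫⁻ r in Ici (0:ℝ), ENNReal.ofReal ((1 + r)⁻¹) ∂μ) < ⊤) :
    IntegrableOn (fun r : ℝ => (1 + r)⁻¹) (Ici 0) μ := by
  constructor
  · exact (measurable_const.add measurable_id).inv.aestronglyMeasurable
  · rw [hasFiniteIntegral_iff_ofReal]
    · exact hμ
    · rw [Filter.EventuallyLE, ae_restrict_iff' measurableSet_Ici]
      filter_upwards with r hr
      simp only [Pi.zero_apply]
      have : (0:ℝ) ≤ 1 + r := by simp at hr; linarith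
      positivity

lemma norm_inv_le {p : ℂ} (hp : 0 ≤ p.re) (hp0 : p ≠ 0) {r : ℝ} (hr : 0 ≤ r) :
    ‖(p + (r : ℂ))⁻¹‖ ≤ 2 * (min (‖p‖) 1)⁻¹ * (1 + r)⁻¹ := by
  set m := min (‖p‖) 1 with hm
  have hp' : 0 < ‖p‖ := by simpa using hp0
  have hm0 : 0 < m := lt_min hp' one_pos
  have hm1 : m ≤ 1 := min_le_right _ _
  have hmp : m ≤ ‖p‖ := min_le_left _ _
  have h1 := abs_le_abs_add hp hr
  have h2 := le_abs_add hp hr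
  have key : m * (1 + r) ≤ 2 * ‖p + r‖ := by nlinarith
  have hw : 0 < ‖p + r‖ := lt_of_lt_of_le hp' h1
  rw [norm_inv]
  calc (‖p + r‖)⁻¹ ≤ (m * (1 + r) / 2)⁻¹ := by
        apply inv_anti₀
        · positivity
        · linarith
    _ = 2 * m⁻¹ * (1 + r)⁻¹ := by
        rw [div_eq_mul_inv, mul_inv, mul_inv]
        ring
  
lemma integrableOn_inv (μ : Measure ℝ)
    (hμ : (∫⁻ r in Ici (0:ℝ), ENNReal.ofReal ((1 + r)⁻¹) ∂μ) < ⊤)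
    {p : ℂ} (hp : 0 ≤ p.re) (hp0 : p ≠ 0) :
    IntegrableOn (fun r : ℝ => (p + (r : ℂ))⁻¹) (Ici 0) μ := by
  apply Integrable.mono' (((integrable_bound μ hμ).const_mul (2 * (min (‖p‖) 1)⁻¹)))
    (meas_inv p).aestronglyMeasurable
  rw [ae_restrict_iff' measurableSet_Ici]
  filter_upwards with r hr
  exact norm_inv_le hp hp0 hr

-- the main integrand f p r = p * (p+r)⁻¹
lemma re_term_nonneg {p : ℂ} (hp : 0 ≤ p.re) (hp0 : p ≠ 0) {r : ℝ} (hr : 0 ≤ r) :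
    0 ≤ (p * (p + (r : ℂ))⁻¹).re := by
  rw [← div_eq_mul_inv, Complex.div_re]
  have h1 : (p + (r:ℂ)).re = p.re + r := by simp
  have h2 : (p + (r:ℂ)).im = p.im := by simp
  rw [h1, h2]
  have h3 := Complex.normSq_nonneg (p + (r:ℂ))
  have h4 : 0 ≤ p.re * (p.re + r) := mul_nonneg hp (by linarith)
  have h5 : 0 ≤ p.im * p.im := mul_self_nonneg _
  positivity

lemma re_term_ge {p : ℂ} (hp : 0 ≤ p.re) (hp0 : p ≠ 0) {r : ℝ} (hr : 0 ≤ r)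
    (hrp : r ≤ ‖p‖) : 4⁻¹ ≤ (p * (p + (r : ℂ))⁻¹).re := by
  rw [← div_eq_mul_inv, Complex.div_re]
  have h1 : (p + (r:ℂ)).re = p.re + r := by simp
  have h2 : (p + (r:ℂ)).im = p.im := by simp
  rw [h1, h2, ← add_div, le_div_iff₀]
  · have hns : Complex.normSq (p + (r:ℂ)) = (p.re + r) * (p.re + r) + p.im * p.im := by
      rw [Complex.normSq_apply, h1, h2]
    rw [hns]
    have hA : ‖p‖ ^ 2 = p.re * p.re + p.im * p.im := by
      rw [Complex.sq_norm, Complex.normSq_apply]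
    nlinarith [norm_nonneg p]
  · rw [Complex.normSq_pos]
    exact add_ne_zero hp hp0 hr



lemma norm_term_sub_one {p : ℂ} (hp : 0 ≤ p.re) (hp0 : p ≠ 0) {r : ℝ} (hr : 0 ≤ r) :
    ‖p * (p + (r:ℂ))⁻¹ - 1‖ = r * (‖p + r‖)⁻¹ := by
  have h := add_ne_zero hp hp0 hr
  have heq : p * (p + (r:ℂ))⁻¹ - 1 = -(r:ℂ) * (p + (r:ℂ))⁻¹ := by
    field_simp
    ring
  rw [heq, norm_mul, norm_inv, norm_neg,
    Complex.norm_real, Real.norm_eq_abs, abs_of_nonneg hr]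

lemma norm_term_sub_one_le_one {p : ℂ} (hp : 0 ≤ p.re) (hp0 : p ≠ 0) {r : ℝ} (hr : 0 ≤ r) :
    ‖p * (p + (r:ℂ))⁻¹ - 1‖ ≤ 1 := by
  rw [norm_term_sub_one hp hp0 hr]
  have hw : 0 < ‖p + r‖ := by
    have : 0 < ‖p‖ := by simpa using hp0
    exact lt_of_lt_of_le this (abs_le_abs_add hp hr)
  calc r * (‖p + r‖)⁻¹
      ≤ ‖p + r‖ * (‖p + r‖)⁻¹ :=
        mul_le_mul_of_nonneg_right (le_abs_add hp hr) (by positivity)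
    _ = 1 := mul_inv_cancel₀ hw.ne'

lemma norm_term_sub_one_le {p : ℂ} (hp : 0 ≤ p.re) (hp0 : p ≠ 0) {r : ℝ} (hr : 0 ≤ r) :
    ‖p * (p + (r:ℂ))⁻¹ - 1‖ ≤ r * (‖p‖)⁻¹ := by
  rw [norm_term_sub_one hp hp0 hr]
  have hp' : 0 < ‖p‖ := by simpa using hp0
  exact mul_le_mul_of_nonneg_left (inv_anti₀ hp' (abs_le_abs_add hp hr)) hr

lemma Icc_fin (μ : Measure ℝ)
    (hμ : (∫⁻ r in Ici (0:ℝ), ENNReal.ofReal ((1 + r)⁻¹) ∂μ) < ⊤)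
    {R : ℝ} (hR : 0 ≤ R) : μ (Icc 0 R) ≠ ⊤ := by
  have h1 : ENNReal.ofReal ((1+R)⁻¹) * μ (Icc 0 R)
      ≤ ∫⁻ r in Ici (0:ℝ), ENNReal.ofReal ((1 + r)⁻¹) ∂μ := by
    calc ENNReal.ofReal ((1+R)⁻¹) * μ (Icc 0 R)
        = ∫⁻ _ in Icc (0:ℝ) R, ENNReal.ofReal ((1+R)⁻¹) ∂μ := (setLIntegral_const _ _).symm
      _ ≤ ∫⁻ r in Icc (0:ℝ) R, ENNReal.ofReal ((1+r)⁻¹) ∂μ := by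
          apply lintegral_mono_ae
          rw [ae_restrict_iff' measurableSet_Icc]
          filter_upwards with r hr
          exact ENNReal.ofReal_le_ofReal
            (inv_anti₀ (by linarith [hr.1]) (by linarith [hr.2]))
      _ ≤ _ := lintegral_mono_set Icc_subset_Ici_self
  intro htop
  rw [htop, ENNReal.mul_top (ENNReal.ofReal_pos.2 (by positivity)).ne'] at h1
  exact (not_le.2 hμ) h1
  
lemma tail_small (μ : Measure ℝ) (hfin : μ (Ici (0:ℝ)) ≠ ⊤) {δ : ℝ} (hδ : 0 < δ) :
    ∃ T : ℝ, 0 ≤ T ∧ (μ (Ioi T)).toReal ≤ δ := by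
  have hanti : Antitone (fun n : ℕ => Ioi ((n:ℝ))) := fun a b hab =>
    Ioi_subset_Ioi (by exact_mod_cast hab)
  have hmeas : ∀ n : ℕ, NullMeasurableSet (Ioi ((n:ℝ))) μ := fun n =>
    measurableSet_Ioi.nullMeasurableSet
  have hne : ∃ n : ℕ, μ (Ioi ((n:ℝ))) ≠ ⊤ :=
    ⟨0, ne_top_of_le_ne_top hfin (measure_mono (by norm_num [Ioi_subset_Ici_self]))⟩
  have hI : ⋂ n : ℕ, Ioi ((n:ℝ)) = ∅ := by
    ext x
    simp only [mem_iInter, mem_Ioi, mem_empty_iff_false, iff_false, not_forall, not_lt]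
    obtain ⟨n, hn⟩ := exists_nat_ge x
    exact ⟨n, hn⟩
  have ht := tendsto_measure_iInter_atTop hmeas hanti hne
  rw [hI, measure_empty] at ht
  have hev := ht.eventually (gt_mem_nhds (ENNReal.ofReal_pos.2 hδ))
  obtain ⟨n, hn⟩ := hev.exists
  exact ⟨n, Nat.cast_nonneg n, ENNReal.toReal_le_of_le_ofReal hδ.le hn.le⟩

lemma mass_large (μ : Measure ℝ) (hinf : μ (Ici (0:ℝ)) = ⊤) (C : ℝ) :
    ∃ T : ℝ, 0 ≤ T ∧ ENNReal.ofReal C ≤ μ (Icc 0 T) := by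
  have hmono : Monotone (fun n : ℕ => Icc (0:ℝ) n) := fun a b hab =>
    Icc_subset_Icc_right (by exact_mod_cast hab)
  have hU : ⋃ n : ℕ, Icc (0:ℝ) n = Ici 0 := by
    ext x
    simp only [mem_iUnion, mem_Icc, mem_Ici]
    constructor
    · rintro ⟨n, h1, _⟩; exact h1
    · intro hx
      obtain ⟨n, hn⟩ := exists_nat_ge x
      exact ⟨n, hx, hn⟩
  have ht := tendsto_measure_iUnion_atTop (μ := μ) hmono
  rw [hU, hinf] at ht
  have hev := ht.eventually (lt_mem_nhds (show ENNReal.ofReal C < ⊤ from ENNReal.ofReal_lt_top))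
  obtain ⟨n, hn⟩ := hev.exists
  exact ⟨n, Nat.cast_nonneg n, hn.le⟩


end Stmt9Aux

open Stmt9Aux

/-- For a viscoelastic medium with density `ρ > 0` and nonzero relaxation
spectral measure `μ` on `[0,∞)` with `∫ (1+r)⁻¹ μ(dr) < ∞`, define
`Q(p) = p ∫_{[0,∞)} (p+r)⁻¹ μ(dr)` and `κ(p) = √ρ · p / Q(p)^{1/2}` (principal branch), and
`G₀ = μ([0,∞)) ∈ (0,∞]`.  Then `κ(p)/p → (ρ/G₀)^{1/2}` (with limit `0` when `G₀ = ∞`) as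
`|p| → ∞` in the closed right half-plane, uniformly in `arg p`. -/
theorem stmt9 (ρ : ℝ) (hρ : 0 < ρ) (μ : Measure ℝ)
    (hμ0 : μ (Ici (0:ℝ)) ≠ 0)
    (hμ : (∫⁻ r in Ici (0:ℝ), ENNReal.ofReal ((1 + r)⁻¹) ∂μ) < ⊤)
    (Q κ : ℂ → ℂ)
    (hQ : ∀ p : ℂ, Q p = p * ∫ r in Ici (0:ℝ), (p + (r : ℂ))⁻¹ ∂μ)
    (hκ : ∀ p : ℂ, κ p = (Real.sqrt ρ : ℂ) * p / (Q p) ^ ((1:ℂ) / 2))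
    (L : ℂ)
    (hL : L = if μ (Ici (0:ℝ)) = ⊤ then 0
      else ((Real.sqrt (ρ / (μ (Ici (0:ℝ))).toReal) : ℝ) : ℂ)) :
    ∀ ε > (0:ℝ), ∃ R₀ > (0:ℝ), ∀ p : ℂ, 0 ≤ p.re → R₀ ≤ ‖p‖ →
      ‖κ p / p - L‖ ≤ ε := by
  intro ε hε
  by_cases hG : μ (Ici (0:ℝ)) = ⊤
  · -- infinite total mass: L = 0
    have hL0 : L = 0 := by rw [hL, if_pos hG]
    obtain ⟨T, hT0, hTC⟩ := mass_large μ hG (16 * ρ / ε ^ 2)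
    refine ⟨max T 1, lt_of_lt_of_le one_pos (le_max_right T 1), ?_⟩
    intro p hp habs
    have hp1 : (1:ℝ) ≤ ‖p‖ := le_trans (le_max_right T 1) habs
    have hpT : T ≤ ‖p‖ := le_trans (le_max_left T 1) habs
    have hp0 : p ≠ 0 := by
      intro h; rw [h] at hp1; simp at hp1; linarith
    have hI := integrableOn_inv μ hμ hp hp0
    have hf : IntegrableOn (fun r : ℝ => p * (p + (r:ℂ))⁻¹) (Ici 0) μ := hI.const_mul p
    have hQ' : Q p = ∫ r in Ici (0:ℝ), p * (p + (r:ℂ))⁻¹ ∂μ := by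
      rw [hQ p, integral_const_mul]
    have hMfin : μ (Icc (0:ℝ) T) ≠ ⊤ := Icc_fin μ hμ hT0
    have hMC : 16 * ρ / ε ^ 2 ≤ (μ (Icc (0:ℝ) T)).toReal := by
      have h1 := ENNReal.toReal_mono hMfin hTC
      rwa [ENNReal.toReal_ofReal (by positivity)] at h1
    have hre : 4⁻¹ * (μ (Icc (0:ℝ) T)).toReal ≤ (Q p).re := by
      have h2 := setIntegral_ge_of_const_le (c := (4:ℝ)⁻¹) measurableSet_Icc hMfin
        (fun r hr => re_term_ge hp hp0 hr.1 (le_trans hr.2 hpT))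
        ((hf.mono_set Icc_subset_Ici_self).re)
      have h1 : ∫ r in Icc (0:ℝ) T, (p * (p + (r:ℂ))⁻¹).re ∂μ
          ≤ ∫ r in Ici (0:ℝ), (p * (p + (r:ℂ))⁻¹).re ∂μ := by
        apply setIntegral_mono_set hf.re
        · rw [Filter.EventuallyLE, ae_restrict_iff' measurableSet_Ici]
          filter_upwards with r hr
          exact re_term_nonneg hp hp0 hr
        · exact HasSubset.Subset.eventuallyLE Icc_subset_Ici_self
      have h3 : ∫ r in Ici (0:ℝ), (p * (p + (r:ℂ))⁻¹).re ∂μ = (Q p).re := by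
        rw [hQ']
        exact integral_re hf
      simp only [smul_eq_mul, measureReal_def] at h2
      linarith
    -- abs (Q p) is large
    have habsQ : 4 * ρ / ε ^ 2 ≤ ‖Q p‖ := by
      have h5 := Complex.re_le_norm (Q p)
      have h4 : 4⁻¹ * (16 * ρ / ε ^ 2) = 4 * ρ / ε ^ 2 := by ring
      have h6 := mul_le_mul_of_nonneg_left hMC (by norm_num : (0:ℝ) ≤ 4⁻¹)
      linarith
    have hQpos : 0 < ‖Q p‖ := lt_of_lt_of_le (by positivity) habsQ
    have hs0 : Q p ^ ((1:ℂ)/2) ≠ 0 := by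
      intro h
      have := abs_half (Q p)
      rw [h] at this
      simp at this
      have := Real.sqrt_pos.2 hQpos
      linarith
    have hκp : κ p / p = (Real.sqrt ρ : ℂ) / Q p ^ ((1:ℂ)/2) := by
      rw [hκ p, div_div, mul_comm (Q p ^ ((1:ℂ)/2)) p,
        mul_comm ((Real.sqrt ρ : ℂ)) p, mul_div_mul_left _ _ hp0]
    rw [hκp, hL0, sub_zero, norm_div, abs_half, Complex.norm_real, Real.norm_eq_abs,
      abs_of_nonneg (Real.sqrt_nonneg ρ)]
    rw [div_le_iff₀ (by positivity)]
    have key : Real.sqrt ρ ≤ Real.sqrt (ε ^ 2 * (4 * ρ / ε ^ 2)) := by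
      apply Real.sqrt_le_sqrt
      have : ε ^ 2 * (4 * ρ / ε ^ 2) = 4 * ρ := by field_simp
      rw [this]; linarith
    calc Real.sqrt ρ ≤ Real.sqrt (ε ^ 2 * (4 * ρ / ε ^ 2)) := key
      _ = ε * Real.sqrt (4 * ρ / ε ^ 2) := by
          rw [Real.sqrt_mul (sq_nonneg ε), Real.sqrt_sq hε.le]
      _ ≤ ε * Real.sqrt (‖Q p‖) :=
          mul_le_mul_of_nonneg_left (Real.sqrt_le_sqrt habsQ) hε.le
  · -- finite total mass
    set G0 := (μ (Ici (0:ℝ))).toReal with hG0def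
    have hG0 : 0 < G0 := ENNReal.toReal_pos hμ0 hG
    have hLval : L = ((Real.sqrt ρ / Real.sqrt G0 : ℝ) : ℂ) := by
      rw [hL, if_neg hG, Real.sqrt_div hρ.le]
    set g := Real.sqrt G0 with hgdef
    have hg : 0 < g := Real.sqrt_pos.2 hG0
    have hsρ : 0 < Real.sqrt ρ := Real.sqrt_pos.2 hρ
    set δ := min (G0/2) (ε * G0 * Real.sqrt (G0/2) / Real.sqrt ρ) with hδdef
    have hδ : 0 < δ := lt_min (by positivity) (by positivity)
    have hδ1 : δ ≤ G0/2 := min_le_left _ _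
    have hδ2 : δ ≤ ε * G0 * Real.sqrt (G0/2) / Real.sqrt ρ := min_le_right _ _
    obtain ⟨T, hT0, hTδ⟩ := tail_small μ hG (half_pos hδ)
    refine ⟨max 1 (2*T*G0/δ + 1), lt_of_lt_of_le one_pos (le_max_left _ _), ?_⟩
    intro p hp habs
    have hp1 : (1:ℝ) ≤ ‖p‖ := le_trans (le_max_left _ _) habs
    have hpR : 2*T*G0/δ + 1 ≤ ‖p‖ := le_trans (le_max_right _ _) habs
    have hp0 : p ≠ 0 := by intro h; rw [h] at hp1; simp at hp1; linarith
    have hppos : 0 < ‖p‖ := lt_of_lt_of_le one_pos hp1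
    have hI := integrableOn_inv μ hμ hp hp0
    have hf : IntegrableOn (fun r : ℝ => p * (p + (r:ℂ))⁻¹) (Ici 0) μ := hI.const_mul p
    have hQ' : Q p = ∫ r in Ici (0:ℝ), p * (p + (r:ℂ))⁻¹ ∂μ := by
      rw [hQ p, integral_const_mul]
    have hconst : IntegrableOn (fun _ : ℝ => (1:ℂ)) (Ici 0) μ :=
      integrableOn_const hG
    have hsub : Q p - (G0:ℂ) = ∫ r in Ici (0:ℝ), (p * (p + (r:ℂ))⁻¹ - 1) ∂μ := by
      rw [integral_sub hf hconst, ← hQ', setIntegral_const]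
      simp [hG0def, measureReal_def]
    have hIccfin : μ (Icc (0:ℝ) T) ≠ ⊤ := Icc_fin μ hμ hT0
    have hIoisub : Ioi T ⊆ Ici (0:ℝ) := fun x hx => le_trans hT0 (le_of_lt hx)
    have hIoifin : μ (Ioi T) ≠ ⊤ := ne_top_of_le_ne_top hG (measure_mono hIoisub)
    have hbound : ‖Q p - (G0:ℂ)‖ ≤ δ := by
      rw [hsub]
      have hun : Ici (0:ℝ) = Icc 0 T ∪ Ioi T := (Icc_union_Ioi_eq_Ici hT0).symm
      have hdisj : Disjoint (Icc (0:ℝ) T) (Ioi T) := by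
        apply disjoint_left.2
        intro x hx1 hx2
        exact absurd hx1.2 (not_le.2 hx2)
      have hfs1 : IntegrableOn (fun r : ℝ => p * (p + (r:ℂ))⁻¹ - 1) (Ici 0) μ := hf.sub hconst
      have hfs : IntegrableOn (fun r : ℝ => p * (p + (r:ℂ))⁻¹ - 1) (Icc 0 T) μ :=
        hfs1.mono_set Icc_subset_Ici_self
      have hft : IntegrableOn (fun r : ℝ => p * (p + (r:ℂ))⁻¹ - 1) (Ioi T) μ :=
        hfs1.mono_set hIoisub
      rw [hun, setIntegral_union hdisj measurableSet_Ioi hfs hft]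
      have hA : ‖∫ r in Icc (0:ℝ) T, (p * (p + (r:ℂ))⁻¹ - 1) ∂μ‖
          ≤ (T * (‖p‖)⁻¹) * (μ (Icc (0:ℝ) T)).toReal := by
        apply norm_setIntegral_le_of_norm_le_const (lt_top_iff_ne_top.2 hIccfin)
        · intro r hr
          refine le_trans (norm_term_sub_one_le hp hp0 hr.1) ?_
          exact mul_le_mul_of_nonneg_right hr.2 (by positivity)
      have hB : ‖∫ r in Ioi T, (p * (p + (r:ℂ))⁻¹ - 1) ∂μ‖
          ≤ 1 * (μ (Ioi T)).toReal := by
        apply norm_setIntegral_le_of_norm_le_const (lt_top_iff_ne_top.2 hIoifin)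
        · intro r hr
          exact norm_term_sub_one_le_one hp hp0 (le_trans hT0 (le_of_lt hr))
      have hA2 : (T * (‖p‖)⁻¹) * (μ (Icc (0:ℝ) T)).toReal ≤ δ / 2 := by
        have hm : (μ (Icc (0:ℝ) T)).toReal ≤ G0 :=
          ENNReal.toReal_mono hG (measure_mono Icc_subset_Ici_self)
        have h8 : (T * (‖p‖)⁻¹) * (μ (Icc (0:ℝ) T)).toReal
            ≤ T * G0 / ‖p‖ := by
          rw [show T * G0 / ‖p‖ = (T * (‖p‖)⁻¹) * G0 by ring]
          exact mul_le_mul_of_nonneg_left hm (by positivity)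
        refine le_trans h8 ?_
        rw [div_le_iff₀ hppos]
        have h9 := mul_le_mul_of_nonneg_left hpR hδ.le
        have h10 : δ * (2*T*G0/δ) = 2*T*G0 := by field_simp
        nlinarith
      have hB2 : 1 * (μ (Ioi T)).toReal ≤ δ / 2 := by rw [one_mul]; exact hTδ
      calc ‖(∫ r in Icc (0:ℝ) T, (p * (p + (r:ℂ))⁻¹ - 1) ∂μ)
            + ∫ r in Ioi T, (p * (p + (r:ℂ))⁻¹ - 1) ∂μ‖
          ≤ ‖∫ r in Icc (0:ℝ) T, (p * (p + (r:ℂ))⁻¹ - 1) ∂μ‖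
            + ‖∫ r in Ioi T, (p * (p + (r:ℂ))⁻¹ - 1) ∂μ‖ := norm_add_le _ _
        _ ≤ δ / 2 + δ / 2 := add_le_add (le_trans hA hA2) (le_trans hB hB2)
        _ = δ := by ring
    have habsQ : G0/2 ≤ ‖Q p‖ := by
      have h1 : ‖(G0:ℂ)‖ - ‖Q p‖ ≤ ‖Q p - (G0:ℂ)‖ := by
        rw [norm_sub_rev]
        exact norm_sub_norm_le _ _
      have h2 : ‖(G0:ℂ)‖ = G0 := by
        rw [Complex.norm_real, Real.norm_eq_abs, abs_of_nonneg hG0.le]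
      have h3 : ‖Q p‖ = ‖Q p‖ := rfl
      rw [h2, h3] at h1
      linarith
    have hwlb : Real.sqrt (G0/2) ≤ ‖Q p ^ ((1:ℂ)/2)‖ := by
      rw [abs_half]
      exact Real.sqrt_le_sqrt habsQ
    have hw0 : Q p ^ ((1:ℂ)/2) ≠ 0 := by
      intro h
      rw [h, norm_zero] at hwlb
      have := Real.sqrt_pos.2 (by positivity : (0:ℝ) < G0/2)
      linarith
    have hgs : ‖Q p ^ ((1:ℂ)/2) - (g:ℂ)‖ ≤ δ / g := by
      have hg2 : ((g:ℂ))^2 = (G0:ℂ) := by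
        rw [← Complex.ofReal_pow, Real.sq_sqrt hG0.le]
      have hid : (Q p ^ ((1:ℂ)/2) - (g:ℂ)) * (Q p ^ ((1:ℂ)/2) + (g:ℂ)) = Q p - (G0:ℂ) := by
        calc (Q p ^ ((1:ℂ)/2) - (g:ℂ)) * (Q p ^ ((1:ℂ)/2) + (g:ℂ))
            = (Q p ^ ((1:ℂ)/2))^2 - ((g:ℂ))^2 := by ring
          _ = Q p - (G0:ℂ) := by rw [sq_half, hg2]
      have hlow : g ≤ ‖Q p ^ ((1:ℂ)/2) + (g:ℂ)‖ := by
        have h4 : g ≤ (Q p ^ ((1:ℂ)/2) + (g:ℂ)).re := by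
          simp only [Complex.add_re, Complex.ofReal_re]
          linarith [re_half_nonneg (Q p)]
        exact le_trans h4 (Complex.re_le_norm _)
      rw [le_div_iff₀ hg]
      calc ‖Q p ^ ((1:ℂ)/2) - (g:ℂ)‖ * g
          ≤ ‖Q p ^ ((1:ℂ)/2) - (g:ℂ)‖ * ‖Q p ^ ((1:ℂ)/2) + (g:ℂ)‖ :=
            mul_le_mul_of_nonneg_left hlow (norm_nonneg _)
        _ = ‖(Q p ^ ((1:ℂ)/2) - (g:ℂ)) * (Q p ^ ((1:ℂ)/2) + (g:ℂ))‖ :=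
            (norm_mul _ _).symm
        _ = ‖Q p - (G0:ℂ)‖ := by rw [hid]
        _ ≤ δ := hbound
    have hκp : κ p / p = (Real.sqrt ρ : ℂ) / Q p ^ ((1:ℂ)/2) := by
      rw [hκ p, div_div, mul_comm (Q p ^ ((1:ℂ)/2)) p,
        mul_comm ((Real.sqrt ρ : ℂ)) p, mul_div_mul_left _ _ hp0]
    rw [hκp, hLval]
    have hg0 : (g:ℂ) ≠ 0 := by
      simp only [ne_eq, Complex.ofReal_eq_zero]
      exact hg.ne'
    have hdiff : (Real.sqrt ρ : ℂ) / Q p ^ ((1:ℂ)/2) - ((Real.sqrt ρ / g : ℝ) : ℂ)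
        = (Real.sqrt ρ : ℂ) * ((g:ℂ) - Q p ^ ((1:ℂ)/2)) / (Q p ^ ((1:ℂ)/2) * (g:ℂ)) := by
      push_cast
      field_simp
    rw [hdiff, norm_div, norm_mul, norm_mul, Complex.norm_real, Real.norm_eq_abs,
      abs_of_nonneg (Real.sqrt_nonneg ρ), Complex.norm_real, Real.norm_eq_abs, abs_of_nonneg hg.le]
    have habs_sub : ‖(g:ℂ) - Q p ^ ((1:ℂ)/2)‖ ≤ δ / g := by
      rw [norm_sub_rev]
      exact hgs
    have hstep : Real.sqrt ρ * ‖(g:ℂ) - Q p ^ ((1:ℂ)/2)‖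
          / (‖Q p ^ ((1:ℂ)/2)‖ * g)
        ≤ Real.sqrt ρ * (δ / g) / (Real.sqrt (G0/2) * g) := by
      apply div_le_div₀ (by positivity)
        (mul_le_mul_of_nonneg_left habs_sub hsρ.le)
        (by positivity)
        (mul_le_mul_of_nonneg_right hwlb hg.le)
    refine le_trans hstep ?_
    have hgg : g * g = G0 := Real.mul_self_sqrt hG0.le
    rw [show Real.sqrt ρ * (δ / g) = (Real.sqrt ρ * δ) / g by ring]
    rw [div_div, div_le_iff₀ (by positivity)]
    have h7 : Real.sqrt ρ * δ ≤ ε * G0 * Real.sqrt (G0/2) := by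
      have h11 := mul_le_mul_of_nonneg_left hδ2 hsρ.le
      have hid2 : Real.sqrt ρ * (ε * G0 * Real.sqrt (G0/2) / Real.sqrt ρ)
          = ε * G0 * Real.sqrt (G0/2) := by
        field_simp
      linarith
    have hfin2 : ε * (g * (Real.sqrt (G0/2) * g)) = ε * G0 * Real.sqrt (G0/2) := by
      rw [← hgg]; ring
    linarith
end

section
/- Let ρ > 0 and let μ be a nonzero positive Radon measure on [0,∞) with ∫_{[0,∞)} (1+r)^{−1} μ(dr) < ∞, with μ({0}) > 0 and G₀ := μ([0,∞)) < ∞. Define Q(p) = p ∫_{[0,∞)} (p+r)^{−1} μ(dr), κ(p) = ρ^{1/2} p / Q(p)^{1/2} (principal square root), and β(p) = κ(p) − (ρ/G₀)^{1/2} p for complex p with Re p ≥ 0, p ≠ 0. Then for every fixed r > 0, the function f(p) = e^{−β(p) r} / (Q(p) κ(p)) is holomorphic in the open right half-plane and tends to 0 as |p| → ∞, uniformly with respect to arg p ∈ [−π/2, π/2]. -/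
open MeasureTheory Set

section Stmt12Aux

variable {μ : Measure ℝ}

private lemma st12_abs_le {p : ℂ} (hp : 0 ≤ p.re) {x : ℝ} (hx : 0 ≤ x) :
    ‖p‖ ≤ ‖p + x‖ := by
  rw [Complex.norm_def, Complex.norm_def]
  apply Real.sqrt_le_sqrt
  simp only [Complex.normSq_apply, Complex.add_re, Complex.add_im, Complex.ofReal_re,
    Complex.ofReal_im, add_zero]
  nlinarith

private lemma st12_x_le {p : ℂ} {x : ℝ} (hx : 0 ≤ x) (hp : 0 ≤ p.re) :
    x ≤ ‖p + x‖ := by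
  calc x ≤ p.re + x := by linarith
  _ = (p + x).re := by simp
  _ ≤ ‖p + x‖ := Complex.re_le_norm _

private lemma st12_ne {p : ℂ} (hp : 0 ≤ p.re) (hp0 : p ≠ 0) {x : ℝ} (hx : 0 ≤ x) :
    p + (x:ℂ) ≠ 0 := by
  intro h
  have h1 := st12_abs_le hp hx
  rw [h, norm_zero] at h1
  exact hp0 (norm_eq_zero.mp (le_antisymm h1 (norm_nonneg p)))

private lemma st12_meas (p : ℂ) : Measurable (fun x : ℝ => ((p + x)⁻¹ : ℂ)) :=
  (measurable_const.add Complex.measurable_ofReal).inv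

private lemma st12_int1 (hfin : μ (Ici (0:ℝ)) ≠ ⊤) {p : ℂ} (hp : 0 ≤ p.re) (hp0 : p ≠ 0) :
    IntegrableOn (fun x : ℝ => ((p + x)⁻¹ : ℂ)) (Ici 0) μ := by
  haveI : IsFiniteMeasure (μ.restrict (Ici 0)) :=
    ⟨by rwa [Measure.restrict_apply_univ, lt_top_iff_ne_top]⟩
  apply Integrable.mono' (integrable_const ((‖p‖)⁻¹)) ((st12_meas p).aestronglyMeasurable)
  rw [ae_restrict_iff' measurableSet_Ici]
  filter_upwards with x hx
  rw [norm_inv]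
  have : 0 < ‖p‖ := by
    simpa [norm_pos_iff] using hp0
  exact inv_anti₀ this (st12_abs_le hp hx)

private lemma st12_int2 (hfin : μ (Ici (0:ℝ)) ≠ ⊤) {p : ℂ} (hp : 0 ≤ p.re) (hp0 : p ≠ 0) :
    IntegrableOn (fun x : ℝ => ((x : ℂ) * (p + x)⁻¹ : ℂ)) (Ici 0) μ := by
  haveI : IsFiniteMeasure (μ.restrict (Ici 0)) :=
    ⟨by rwa [Measure.restrict_apply_univ, lt_top_iff_ne_top]⟩
  apply Integrable.mono' (integrable_const (1:ℝ))
    (Complex.measurable_ofReal.mul (st12_meas p)).aestronglyMeasurable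
  rw [ae_restrict_iff' measurableSet_Ici]
  filter_upwards with x hx
  simp only [Pi.mul_apply]
  rw [norm_mul, norm_inv, Complex.norm_real, Real.norm_eq_abs,
    _root_.abs_of_nonneg hx]
  rcases eq_or_lt_of_le (st12_x_le hx hp) with h | h
  · rcases (show (0:ℝ) ≤ x from hx).lt_or_eq with h0 | h0
    · rw [← h, mul_inv_cancel₀ (by linarith)]
    · simp [← h0]
  · rcases (show (0:ℝ) ≤ x from hx).lt_or_eq with h0 | h0
    · rw [mul_inv_le_iff₀ (h0.trans h), one_mul]; exact h.le
    · simp [← h0]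

private lemma st12_decomp (hfin : μ (Ici (0:ℝ)) ≠ ⊤) {p : ℂ} (hp : 0 ≤ p.re) (hp0 : p ≠ 0) :
    p * ∫ x in Ici (0:ℝ), ((p + x)⁻¹ : ℂ) ∂μ =
      ((μ (Ici (0:ℝ))).toReal : ℂ) - ∫ x in Ici (0:ℝ), ((x : ℂ) * (p + x)⁻¹ : ℂ) ∂μ := by
  rw [← integral_const_mul]
  have heq : EqOn (fun x : ℝ => p * ((p + x)⁻¹ : ℂ))
      (fun x : ℝ => (1 : ℂ) - (x : ℂ) * (p + x)⁻¹) (Ici 0) := by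
    intro x hx
    have hne : p + (x:ℂ) ≠ 0 := st12_ne hp hp0 hx
    field_simp
    ring
  rw [setIntegral_congr_fun measurableSet_Ici heq,
    integral_sub (integrableOn_const (C := (1:ℂ)) hfin :
      Integrable (fun _ : ℝ => (1:ℂ)) (μ.restrict (Ici 0)))
      (st12_int2 hfin hp hp0), setIntegral_const]
  simp [measureReal_def]

private lemma st12_ptwise {p : ℂ} (hp : 0 ≤ p.re) (hp0 : p ≠ 0) {x : ℝ} (hx : 0 ≤ x) :
    0 ≤ (p * (p + x)⁻¹).re ∧
    (p * (p + x)⁻¹).im = p.im * x / Complex.normSq (p + x) := by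
  have hne := st12_ne hp hp0 hx
  have hnsq : 0 < Complex.normSq (p + x) := Complex.normSq_pos.mpr hne
  rw [show p * ((p:ℂ) + x)⁻¹ = p / (p + x) from (div_eq_mul_inv p _).symm]
  constructor
  · rw [Complex.div_re]
    simp only [Complex.add_re, Complex.add_im, Complex.ofReal_re, Complex.ofReal_im, add_zero]
    have h1 : 0 ≤ p.re * (p.re + x) := mul_nonneg hp (by linarith)
    have h2 : 0 ≤ p.im * p.im := mul_self_nonneg _
    exact add_nonneg (div_nonneg h1 hnsq.le) (div_nonneg h2 hnsq.le)
  · rw [Complex.div_im]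
    simp only [Complex.add_re, Complex.add_im, Complex.ofReal_re, Complex.ofReal_im, add_zero]
    field_simp
    ring

private lemma st12_quad_int {f : ℝ → ℂ} (hf : IntegrableOn f (Ici 0) μ)
    (h1 : ∀ x ∈ Ici (0:ℝ), 0 ≤ (f x).re) :
    0 ≤ (∫ x in Ici (0:ℝ), f x ∂μ).re := by
  have := integral_re (μ := μ.restrict (Ici 0)) hf
  simp only [RCLike.re_to_complex] at this
  rw [← this]
  exact setIntegral_nonneg measurableSet_Ici h1

private lemma st12_quad_int_im {f : ℝ → ℂ} (hf : IntegrableOn f (Ici 0) μ)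
    (h1 : ∀ x ∈ Ici (0:ℝ), 0 ≤ (f x).im) :
    0 ≤ (∫ x in Ici (0:ℝ), f x ∂μ).im := by
  have := integral_im (μ := μ.restrict (Ici 0)) hf
  simp only [RCLike.im_to_complex] at this
  rw [← this]
  exact setIntegral_nonneg measurableSet_Ici h1

private lemma st12_quad_int_im' {f : ℝ → ℂ} (hf : IntegrableOn f (Ici 0) μ)
    (h1 : ∀ x ∈ Ici (0:ℝ), (f x).im ≤ 0) :
    (∫ x in Ici (0:ℝ), f x ∂μ).im ≤ 0 := by
  have := integral_im (μ := μ.restrict (Ici 0)) hf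
  simp only [RCLike.im_to_complex] at this
  rw [← this]
  exact setIntegral_nonpos measurableSet_Ici h1

/-- The complex modulus `Q(p)` lies in the closed quadrant determined by `sign (Im p)`. -/
private lemma st12_Qquad (hfin : μ (Ici (0:ℝ)) ≠ ⊤) {p : ℂ} (hp : 0 ≤ p.re) (hp0 : p ≠ 0) :
    0 ≤ (p * ∫ x in Ici (0:ℝ), ((p + x)⁻¹ : ℂ) ∂μ).re ∧
    (0 ≤ p.im → 0 ≤ (p * ∫ x in Ici (0:ℝ), ((p + x)⁻¹ : ℂ) ∂μ).im) ∧
    (p.im ≤ 0 → (p * ∫ x in Ici (0:ℝ), ((p + x)⁻¹ : ℂ) ∂μ).im ≤ 0) := by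
  rw [← integral_const_mul]
  have hint : IntegrableOn (fun x : ℝ => p * ((p + x)⁻¹ : ℂ)) (Ici 0) μ :=
    (st12_int1 hfin hp hp0).const_mul p
  refine ⟨st12_quad_int hint (fun x hx => (st12_ptwise hp hp0 hx).1),
    fun h => st12_quad_int_im hint (fun x hx => ?_),
    fun h => st12_quad_int_im' hint (fun x hx => ?_)⟩
  · rw [(st12_ptwise hp hp0 hx).2]
    exact div_nonneg (mul_nonneg h hx) (Complex.normSq_nonneg _)
  · rw [(st12_ptwise hp hp0 hx).2]
    apply div_nonpos_of_nonpos_of_nonneg _ (Complex.normSq_nonneg _)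
    exact mul_nonpos_iff.mpr (Or.inr ⟨h, hx⟩)

/-- `p E(p)` lies in the closed quadrant determined by `sign (Im p)`. -/
private lemma st12_Nquad (hfin : μ (Ici (0:ℝ)) ≠ ⊤) {p : ℂ} (hp : 0 ≤ p.re) (hp0 : p ≠ 0) :
    0 ≤ (p * ∫ x in Ici (0:ℝ), ((x:ℂ) * (p + x)⁻¹ : ℂ) ∂μ).re ∧
    (0 ≤ p.im → 0 ≤ (p * ∫ x in Ici (0:ℝ), ((x:ℂ) * (p + x)⁻¹ : ℂ) ∂μ).im) ∧
    (p.im ≤ 0 → (p * ∫ x in Ici (0:ℝ), ((x:ℂ) * (p + x)⁻¹ : ℂ) ∂μ).im ≤ 0) := by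
  rw [← integral_const_mul]
  have heq : (fun x : ℝ => p * ((x:ℂ) * (p + x)⁻¹)) =
      fun x : ℝ => (x:ℂ) * (p * ((p + x)⁻¹ : ℂ)) := by
    funext x; ring
  rw [heq]
  have hint : IntegrableOn (fun x : ℝ => (x:ℂ) * (p * ((p + x)⁻¹ : ℂ))) (Ici 0) μ := by
    apply ((st12_int2 hfin hp hp0).const_mul p).congr
    filter_upwards with x using by ring
  refine ⟨st12_quad_int hint (fun x hx => ?_),
    fun h => st12_quad_int_im hint (fun x hx => ?_),
    fun h => st12_quad_int_im' hint (fun x hx => ?_)⟩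
  · rw [Complex.re_ofReal_mul]
    exact mul_nonneg hx (st12_ptwise hp hp0 hx).1
  · rw [Complex.im_ofReal_mul, (st12_ptwise hp hp0 hx).2]
    exact mul_nonneg hx (div_nonneg (mul_nonneg h hx) (Complex.normSq_nonneg _))
  · rw [Complex.im_ofReal_mul, (st12_ptwise hp hp0 hx).2]
    have hq : p.im * x / Complex.normSq (p + x) ≤ 0 := by
      apply div_nonpos_of_nonpos_of_nonneg _ (Complex.normSq_nonneg _)
      exact mul_nonpos_iff.mpr (Or.inr ⟨h, hx⟩)
    exact mul_nonpos_iff.mpr (Or.inl ⟨hx, hq⟩)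

private lemma st12_sq_sqrt {z : ℂ} (hz : z ≠ 0) : (z ^ ((1:ℂ)/2)) ^ 2 = z := by
  have := Complex.cpow_nat_inv_pow z (n := 2) (by norm_num)
  simpa [one_div, show ((2:ℕ):ℂ) = 2 by norm_num] using this

private lemma st12_sqrt_ne {z : ℂ} (hz : z ≠ 0) : z ^ ((1:ℂ)/2) ≠ 0 := by
  intro h
  have h2 := st12_sq_sqrt hz
  rw [h] at h2
  exact hz (by simpa using h2.symm)

private lemma st12_sqrt_quad {z : ℂ} (hz : z ≠ 0) (hre : 0 ≤ z.re) :
    0 < (z ^ ((1:ℂ)/2)).re ∧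
    (0 ≤ z.im → 0 ≤ (z ^ ((1:ℂ)/2)).im) ∧ (z.im ≤ 0 → (z ^ ((1:ℂ)/2)).im ≤ 0) := by
  have harg : |Complex.arg z| ≤ Real.pi / 2 := Complex.abs_arg_le_pi_div_two_iff.mpr hre
  rw [Complex.cpow_def_of_ne_zero hz]
  have hre' : (Complex.log z * ((1:ℂ)/2)).re = (Complex.log z).re * (1/2) := by
    simp [Complex.mul_re]
  have him' : (Complex.log z * ((1:ℂ)/2)).im = Complex.arg z * (1/2) := by
    simp [Complex.mul_im, Complex.log_im]
  refine ⟨?_, ?_, ?_⟩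
  · rw [Complex.exp_re, hre', him']
    apply mul_pos (Real.exp_pos _)
    apply Real.cos_pos_of_mem_Ioo
    constructor
    · nlinarith [abs_le.mp harg, Real.pi_pos]
    · nlinarith [abs_le.mp harg, Real.pi_pos]
  · intro him
    rw [Complex.exp_im, him']
    apply mul_nonneg (Real.exp_pos _).le
    apply Real.sin_nonneg_of_nonneg_of_le_pi
    · have := Complex.arg_nonneg_iff.mpr him
      linarith
    · nlinarith [abs_le.mp harg, Real.pi_pos]
  · intro him
    rw [Complex.exp_im, him']
    apply mul_nonpos_of_nonneg_of_nonpos (Real.exp_pos _).le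
    have h1 : Complex.arg z ≤ 0 := by
      rcases him.lt_or_eq with h | h
      · exact (Complex.arg_neg_iff.mpr h).le
      · exact le_of_eq (Complex.arg_eq_zero_iff.mpr ⟨hre, h⟩)
    have h2 : -Real.pi ≤ Complex.arg z * (1/2) := by nlinarith [abs_le.mp harg, Real.pi_pos]
    exact Real.sin_nonpos_of_nonpos_of_neg_pi_le (by linarith) h2

/-- The heart of the matter: nonnegativity of the attenuation `Re β` on the closed
right half-plane, expressed through purely algebraic quadrant conditions. -/
private lemma st12_core {c sG : ℝ} (hc : 0 < c) (hsG : 0 < sG)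
    {p Qp Np : ℂ} (hQ0 : Qp ≠ 0) (hQre : 0 ≤ Qp.re)
    (hQim : 0 ≤ p.im → 0 ≤ Qp.im) (hQim' : p.im ≤ 0 → Qp.im ≤ 0)
    (hrel : Np = p * ((sG:ℂ)^2 - Qp))
    (hNre : 0 ≤ Np.re) (hNim : 0 ≤ p.im → 0 ≤ Np.im) (hNim' : p.im ≤ 0 → Np.im ≤ 0) :
    0 ≤ ((c:ℂ) * (sG:ℂ) * p / (Qp ^ ((1:ℂ)/2)) - (c:ℂ) * p).re := by
  set S := Qp ^ ((1:ℂ)/2) with hS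
  have hS2 : S ^ 2 = Qp := st12_sq_sqrt hQ0
  obtain ⟨hSre, hSim, hSim'⟩ := st12_sqrt_quad hQ0 hQre
  have hS0 : S ≠ 0 := by
    intro h
    rw [h] at hS2
    exact hQ0 (by simpa using hS2.symm)
  set D := (sG:ℂ) * S + Qp with hD
  have hDre : 0 < D.re := by
    rw [hD, Complex.add_re, Complex.re_ofReal_mul]
    have : 0 < sG * S.re := mul_pos hsG hSre
    linarith
  have hD0 : D ≠ 0 := fun h => by simp [h] at hDre
  have hD0' : (sG:ℂ) * S + S ^ 2 ≠ 0 := by rw [hS2]; exact hD0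
  have key : (c:ℂ) * (sG:ℂ) * p / S - (c:ℂ) * p = (c:ℂ) * Np / D := by
    rw [hrel, hD, ← hS2, eq_div_iff hD0']
    linear_combination ((c:ℂ)*(sG:ℂ)^2*p + (c:ℂ)*(sG:ℂ)*p*S) * mul_inv_cancel₀ hS0
  rw [key, mul_div_assoc, Complex.re_ofReal_mul]
  apply mul_nonneg hc.le
  rw [Complex.div_re]
  have hprod : 0 ≤ Np.im * D.im := by
    have hDim : D.im = sG * S.im + Qp.im := by rw [hD, Complex.add_im, Complex.im_ofReal_mul]
    rcases le_total 0 p.im with h | h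
    · have ha := hNim h
      have hb : 0 ≤ D.im := by
        rw [hDim]
        have := mul_nonneg hsG.le (hSim (hQim h))
        linarith [hQim h]
      exact mul_nonneg ha hb
    · have ha := hNim' h
      have hb : D.im ≤ 0 := by
        rw [hDim]
        have h3 := hSim' (hQim' h)
        nlinarith [hQim' h]
      nlinarith
  have h1 : 0 ≤ Np.re * D.re := mul_nonneg hNre hDre.le
  have h2 : 0 ≤ Complex.normSq D := Complex.normSq_nonneg _
  positivity

/-- Uniform smallness of `E(p) = ∫ r (p+r)⁻¹ dμ` as `|p| → ∞` in the closed half-plane. -/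
private lemma st12_Esmall (hfin : μ (Ici (0:ℝ)) ≠ ⊤) {η : ℝ} (hη : 0 < η) :
    ∃ R : ℝ, 1 ≤ R ∧ ∀ p : ℂ, 0 ≤ p.re → R ≤ ‖p‖ →
      ‖∫ x in Ici (0:ℝ), ((x : ℂ) * (p + x)⁻¹) ∂μ‖ ≤ η := by
  haveI : IsFiniteMeasure (μ.restrict (Ici 0)) :=
    ⟨by rwa [Measure.restrict_apply_univ, lt_top_iff_ne_top]⟩
  have hmeas : ∀ n : ℕ, AEStronglyMeasurable (fun x : ℝ => min 1 (x / (n:ℝ)))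
      (μ.restrict (Ici 0)) := fun n =>
    (continuous_const.min (continuous_id.div_const _)).aestronglyMeasurable
  have htend : Filter.Tendsto (fun n : ℕ => ∫ x in Ici (0:ℝ), min 1 (x / (n:ℝ)) ∂μ)
      Filter.atTop (nhds 0) := by
    have h0 : nhds (0:ℝ) = nhds (∫ x in Ici (0:ℝ), (0:ℝ) ∂μ) := by simp
    rw [h0]
    apply tendsto_integral_of_dominated_convergence (fun _ => (1:ℝ)) hmeas
      (integrable_const 1)
    · intro n
      rw [ae_restrict_iff' measurableSet_Ici]
      filter_upwards with x hx
      rw [Real.norm_eq_abs, abs_le]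
      constructor
      · have : (0:ℝ) ≤ x / n := div_nonneg hx (Nat.cast_nonneg n)
        simp only [le_min_iff]
        constructor <;> linarith
      · exact min_le_left _ _
    · rw [ae_restrict_iff' measurableSet_Ici]
      filter_upwards with x hx
      exact squeeze_zero (fun n => le_min zero_le_one (div_nonneg hx (Nat.cast_nonneg n)))
        (fun n => min_le_right _ _) (tendsto_const_div_atTop_nhds_zero_nat x)
  obtain ⟨N, hN, hN1⟩ := ((htend.eventually_lt_const hη).and (Filter.eventually_ge_atTop 1)).exists
  have hNpos : (0:ℝ) < (N:ℝ) := by exact_mod_cast Nat.lt_of_lt_of_le Nat.zero_lt_one hN1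
  refine ⟨max 1 (N:ℝ), le_max_left _ _, fun p hpre hpabs => ?_⟩
  have hp0 : p ≠ 0 := by
    intro h
    rw [h, norm_zero] at hpabs
    have := le_max_left (1:ℝ) N
    linarith
  calc ‖∫ x in Ici (0:ℝ), ((x : ℂ) * (p + x)⁻¹) ∂μ‖
      ≤ ∫ x in Ici (0:ℝ), ‖(x : ℂ) * (p + x)⁻¹‖ ∂μ := by
        exact norm_integral_le_integral_norm _
    _ ≤ ∫ x in Ici (0:ℝ), min 1 (x / (N:ℝ)) ∂μ := by
        have hgint : Integrable (fun x : ℝ => min 1 (x / (N:ℝ))) (μ.restrict (Ici 0)) := by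
          apply Integrable.mono' (integrable_const (1:ℝ)) (hmeas N)
          rw [ae_restrict_iff' measurableSet_Ici]
          filter_upwards with x hx
          rw [Real.norm_eq_abs, abs_le]
          have : (0:ℝ) ≤ x / N := div_nonneg hx (Nat.cast_nonneg N)
          refine ⟨by simp only [le_min_iff]; constructor <;> linarith, min_le_left _ _⟩
        apply setIntegral_mono_on (st12_int2 hfin hpre hp0).norm hgint measurableSet_Ici
        intro x hx
        have hx' : (0:ℝ) ≤ x := hx
        rw [norm_mul, norm_inv, Complex.norm_real, Real.norm_eq_abs,
          _root_.abs_of_nonneg hx']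
        have habs : (0:ℝ) < ‖p + x‖ := by
          have h1 : (1:ℝ) ≤ ‖p‖ := le_trans (by simp [le_max_left]) hpabs
          have := st12_abs_le hpre hx'
          linarith
        rw [le_min_iff]
        constructor
        · rw [mul_inv_le_iff₀ habs, one_mul]
          exact st12_x_le hx' hpre
        · rcases hx'.lt_or_eq with h0x | h0x
          · rw [mul_inv_le_iff₀ habs, div_mul_eq_mul_div, le_div_iff₀ hNpos]
            have h1 : (N:ℝ) ≤ ‖p‖ := le_trans (le_max_right _ _) hpabs
            have h2 := st12_abs_le hpre hx'
            nlinarith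
          · simp [← h0x]
    _ ≤ η := hN.le

/-- Differentiability of `p ↦ ∫ (p+r)⁻¹ dμ(r)` in the open right half plane. -/
private lemma st12_deriv (hμ : (∫⁻ x in Ici (0:ℝ), ENNReal.ofReal ((1 + x)⁻¹) ∂μ) < ⊤)
    (hfin : μ (Ici (0:ℝ)) ≠ ⊤) {p₀ : ℂ} (hp₀ : 0 < p₀.re) :
    DifferentiableAt ℂ (fun p : ℂ => ∫ x in Ici (0:ℝ), ((p + x)⁻¹ : ℂ) ∂μ) p₀ := by
  haveI : IsFiniteMeasure (μ.restrict (Ici 0)) :=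
    ⟨by rwa [Measure.restrict_apply_univ, lt_top_iff_ne_top]⟩
  set d : ℝ := p₀.re / 2 with hd
  have hdpos : 0 < d := by positivity
  set C : ℝ := (min (d ^ 2) (2 * d))⁻¹ with hC
  have hCpos : 0 < C := by
    rw [hC]
    have h1 : 0 < min (d ^ 2) (2 * d) := lt_min (by positivity) (by positivity)
    positivity
  have hbase : Integrable (fun x : ℝ => (1 + x)⁻¹) (μ.restrict (Ici 0)) := by
    refine ⟨((measurable_const.add measurable_id).inv).aestronglyMeasurable, ?_⟩
    have hnn : 0 ≤ᵐ[μ.restrict (Ici 0)] fun x : ℝ => (1 + x)⁻¹ := by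
      have : ∀ᵐ x ∂μ.restrict (Ici 0), 0 ≤ (1 + x)⁻¹ := by
        rw [ae_restrict_iff' measurableSet_Ici]
        filter_upwards with x hx
        have hx' : (0:ℝ) ≤ x := hx
        positivity
      exact this
    rw [hasFiniteIntegral_iff_ofReal hnn]
    exact hμ
  have hbound : Integrable (fun x : ℝ => C * (1 + x)⁻¹) (μ.restrict (Ici 0)) := hbase.const_mul C
  have hball : ∀ p ∈ Metric.ball p₀ d, ∀ x : ℝ, 0 ≤ x → d + x ≤ ‖p + x‖ := by
    intro p hp x hx
    have h1 : ‖p - p₀‖ < d := by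
      rw [Metric.mem_ball, Complex.dist_eq] at hp; exact hp
    have h2 : |(p - p₀).re| ≤ ‖p - p₀‖ := Complex.abs_re_le_norm _
    have h3 : d < p.re := by
      simp only [Complex.sub_re] at h2
      cases abs_le.mp h2 with
      | intro hl hr => simp only [hd] at *; linarith
    calc d + x ≤ (p + x).re := by simp; linarith
    _ ≤ ‖p + x‖ := Complex.re_le_norm _
  have hne : ∀ p ∈ Metric.ball p₀ d, ∀ x : ℝ, 0 ≤ x → p + (x:ℂ) ≠ 0 := by
    intro p hp x hx h
    have := hball p hp x hx
    rw [h, norm_zero] at this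
    linarith
  have key := hasDerivAt_integral_of_dominated_loc_of_lip (F := fun p (x : ℝ) => ((p + x)⁻¹ : ℂ))
    (F' := fun x : ℝ => -(((p₀ + x) ^ 2)⁻¹ : ℂ)) (μ := μ.restrict (Ici 0)) (x₀ := p₀)
    (bound := fun x : ℝ => C * (1 + x)⁻¹) (Metric.ball_mem_nhds p₀ hdpos)
    (Filter.Eventually.of_forall fun p =>
      ((measurable_const.add Complex.measurable_ofReal).inv).aestronglyMeasurable)
    (st12_int1 hfin hp₀.le (fun h => by simp [h] at hp₀)) ?_ ?_ hbound ?_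
  · exact key.2.differentiableAt
  · exact ((((measurable_const.add Complex.measurable_ofReal).pow_const 2).inv).neg).aestronglyMeasurable
  · rw [ae_restrict_iff' measurableSet_Ici]
    filter_upwards with x hx
    rw [lipschitzOnWith_iff_dist_le_mul]
    intro p hp q hq
    have hpx := hball p hp x hx
    have hqx := hball q hq x hx
    have hpne := hne p hp x hx
    have hqne := hne q hq x hx
    have heq : (p + (x:ℂ))⁻¹ - (q + x)⁻¹ = (q - p) * ((p + x)⁻¹ * (q + x)⁻¹) := by
      field_simp
      ring
    rw [Complex.dist_eq, heq, norm_mul, norm_mul, norm_inv, norm_inv]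
    have h1 : ‖q - p‖ = dist p q := by
      rw [Complex.dist_eq, norm_sub_rev]
    rw [h1]
    have hx' : (0:ℝ) ≤ x := hx
    have h1x : (0:ℝ) < 1 + x := by linarith
    rw [Real.coe_nnabs, _root_.abs_of_nonneg (mul_nonneg hCpos.le (by positivity))]
    rw [mul_comm (C * (1 + x)⁻¹) (dist p q)]
    apply mul_le_mul_of_nonneg_left ?_ dist_nonneg
    have hda : 0 < d + x := by linarith
    have h2 : (‖p + x‖)⁻¹ ≤ (d + x)⁻¹ := inv_anti₀ hda hpx
    have h3 : (‖q + x‖)⁻¹ ≤ (d + x)⁻¹ := inv_anti₀ hda hqx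
    calc (‖p + x‖)⁻¹ * (‖q + x‖)⁻¹ ≤ (d + x)⁻¹ * (d + x)⁻¹ := by
          apply mul_le_mul h2 h3 (by positivity) (by positivity)
    _ ≤ C * (1 + x)⁻¹ := by
          rw [← mul_inv, hC, ← mul_inv]
          apply inv_anti₀ (by positivity)
          have hm1 : min (d ^ 2) (2 * d) ≤ d ^ 2 := min_le_left _ _
          have hm2 : min (d ^ 2) (2 * d) ≤ 2 * d := min_le_right _ _
          nlinarith
  · rw [ae_restrict_iff' measurableSet_Ici]
    filter_upwards with x hx
    have h0 : p₀ + (x:ℂ) ≠ 0 := hne p₀ (Metric.mem_ball_self hdpos) x hx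
    have h1 : HasDerivAt (fun p : ℂ => p + (x:ℂ)) 1 p₀ := (hasDerivAt_id p₀).add_const _
    have := h1.inv h0
    simpa [neg_div, one_div, Pi.inv_def] using this

/-- Strict positivity of `Re ∫ (p+r)⁻¹ dμ(r)` for `Re p > 0`, using `μ({0}) > 0`. -/
private lemma st12_Apos (h0 : μ {(0:ℝ)} ≠ 0) (hfin : μ (Ici (0:ℝ)) ≠ ⊤) {p : ℂ}
    (hp : 0 < p.re) :
    0 < (∫ x in Ici (0:ℝ), ((p + x)⁻¹ : ℂ) ∂μ).re := by
  have hp0 : p ≠ 0 := fun h => by simp [h] at hp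
  have hint := st12_int1 hfin hp.le hp0
  have hre := integral_re (μ := μ.restrict (Ici 0)) hint
  simp only [RCLike.re_to_complex] at hre
  rw [← hre]
  have hnn : 0 ≤ᵐ[μ.restrict (Ici 0)] fun x : ℝ => ((p + x)⁻¹ : ℂ).re := by
    have : ∀ᵐ x : ℝ ∂μ.restrict (Ici 0), 0 ≤ ((p + (x:ℂ))⁻¹ : ℂ).re := by
      rw [ae_restrict_iff' measurableSet_Ici]
      filter_upwards with x hx
      rw [Complex.inv_re]
      apply div_nonneg _ (Complex.normSq_nonneg _)
      simp only [Complex.add_re, Complex.ofReal_re]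
      have hx' : (0:ℝ) ≤ x := hx
      linarith
    exact this
  have hint' : IntegrableOn (fun x : ℝ => ((p + x)⁻¹ : ℂ).re) (Ici 0) μ := by
    exact hint.re
  rw [setIntegral_pos_iff_support_of_nonneg_ae hnn hint']
  have hsub : {(0:ℝ)} ⊆ Function.support (fun x : ℝ => ((p + x)⁻¹ : ℂ).re) ∩ Ici 0 := by
    intro x hx
    rw [mem_singleton_iff] at hx
    subst hx
    constructor
    · rw [Function.mem_support]
      have hne : p + ((0:ℝ):ℂ) ≠ 0 := by simpa using hp0
      rw [Complex.inv_re]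
      have hnsq : 0 < Complex.normSq (p + ((0:ℝ):ℂ)) := Complex.normSq_pos.mpr hne
      have : 0 < (p + ((0:ℝ):ℂ)).re := by simpa using hp
      positivity
    · exact le_refl (0:ℝ)
  calc (0:ENNReal) < μ {(0:ℝ)} := pos_iff_ne_zero.mpr h0
  _ ≤ μ (Function.support (fun x : ℝ => ((p + x)⁻¹ : ℂ).re) ∩ Ici 0) := measure_mono hsub

end Stmt12Aux
/-- Let `ρ > 0` and let `μ` be a nonzero positive Radon measure on `[0,∞)`
with `∫ (1+r)⁻¹ μ(dr) < ∞`, `μ({0}) > 0` and `G₀ := μ([0,∞)) < ∞`.  With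
`Q(p) = p ∫ (p+r)⁻¹ μ(dr)`, `κ(p) = √ρ p / Q(p)^{1/2}` (principal branch) and
`β(p) = κ(p) − (ρ/G₀)^{1/2} p`, for every fixed `r > 0` the function
`f(p) = e^{−β(p) r} / (Q(p) κ(p))` is holomorphic in the open right half-plane and tends to
`0` as `|p| → ∞` there, uniformly in `arg p`. -/
theorem stmt12 (ρ : ℝ) (hρ : 0 < ρ) (μ : Measure ℝ)
    (hμ : (∫⁻ r in Ici (0:ℝ), ENNReal.ofReal ((1 + r)⁻¹) ∂μ) < ⊤)
    (h0 : μ {(0:ℝ)} ≠ 0) (hfin : μ (Ici (0:ℝ)) ≠ ⊤)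
    (Q κ β : ℂ → ℂ)
    (hQ : ∀ p : ℂ, Q p = p * ∫ r in Ici (0:ℝ), (p + (r : ℂ))⁻¹ ∂μ)
    (hκ : ∀ p : ℂ, κ p = (Real.sqrt ρ : ℂ) * p / (Q p) ^ ((1:ℂ) / 2))
    (hβ : ∀ p : ℂ, β p = κ p - ((Real.sqrt (ρ / (μ (Ici (0:ℝ))).toReal) : ℝ) : ℂ) * p)
    (r : ℝ) (hr : 0 < r) :
    DifferentiableOn ℂ (fun p : ℂ => Complex.exp (-β p * r) / (Q p * κ p))
        {p : ℂ | 0 < p.re} ∧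
      ∀ ε > (0:ℝ), ∃ R₀ > (0:ℝ), ∀ p : ℂ, 0 ≤ p.re → R₀ ≤ ‖p‖ →
        ‖Complex.exp (-β p * r) / (Q p * κ p)‖ ≤ ε := by
  set G : ℝ := (μ (Ici (0:ℝ))).toReal with hGdef
  have hμpos : 0 < μ (Ici (0:ℝ)) := by
    apply lt_of_lt_of_le (pos_iff_ne_zero.mpr h0)
    exact measure_mono (by simp)
  have hG : 0 < G := ENNReal.toReal_pos (ne_of_gt hμpos) hfin
  set sρ : ℝ := Real.sqrt ρ with hsρdef
  have hsρ : 0 < sρ := Real.sqrt_pos.mpr hρ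
  set sG : ℝ := Real.sqrt G with hsGdef
  have hsG : 0 < sG := Real.sqrt_pos.mpr hG
  set c : ℝ := Real.sqrt (ρ / G) with hcdef
  have hcpos : 0 < c := Real.sqrt_pos.mpr (div_pos hρ hG)
  have hc : c = sρ / sG := by rw [hcdef, hsρdef, hsGdef]; exact Real.sqrt_div hρ.le G
  have hcsG : (sρ:ℂ) = (c:ℂ) * (sG:ℂ) := by
    have h1 : sρ = c * sG := by rw [hc, div_mul_cancel₀ _ (ne_of_gt hsG)]
    exact_mod_cast congrArg (fun t : ℝ => (t:ℂ)) h1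
  have hsG2 : ((sG:ℝ):ℂ)^2 = ((G:ℝ):ℂ) := by
    rw [← Complex.ofReal_pow, Real.sq_sqrt hG.le]
  have hβ' : ∀ p : ℂ, β p = (sρ:ℂ) * p /
      ((p * ∫ x in Ici (0:ℝ), ((p + (x:ℂ))⁻¹ : ℂ) ∂μ) ^ ((1:ℂ)/2)) - (c:ℂ) * p := by
    intro p
    rw [hβ p, hκ p, hQ p]
  constructor
  · -- holomorphy
    intro p hp
    simp only [mem_setOf_eq] at hp
    have hp0 : p ≠ 0 := fun h => by simp [h] at hp
    have hA : DifferentiableAt ℂ (fun q : ℂ => ∫ x in Ici (0:ℝ), ((q + (x:ℂ))⁻¹ : ℂ) ∂μ) p :=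
      st12_deriv hμ hfin hp
    have hApos := st12_Apos h0 hfin hp
    have hA0 : (∫ x in Ici (0:ℝ), ((p + (x:ℂ))⁻¹ : ℂ) ∂μ) ≠ 0 := by
      intro h; rw [h] at hApos; simp at hApos
    have hQ0 : p * (∫ x in Ici (0:ℝ), ((p + (x:ℂ))⁻¹ : ℂ) ∂μ) ≠ 0 := mul_ne_zero hp0 hA0
    have hQd : DifferentiableAt ℂ
        (fun q : ℂ => q * ∫ x in Ici (0:ℝ), ((q + (x:ℂ))⁻¹ : ℂ) ∂μ) p :=
      differentiableAt_fun_id.mul hA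
    have hquad := st12_Qquad hfin hp.le hp0
    have hslit : p * (∫ x in Ici (0:ℝ), ((p + (x:ℂ))⁻¹ : ℂ) ∂μ) ∈ Complex.slitPlane := by
      rw [Complex.mem_slitPlane_iff]
      rcases hquad.1.lt_or_eq with h | h
      · exact Or.inl h
      · refine Or.inr fun him => hQ0 (Complex.ext (by simp [← h]) (by simp [him]))
    have hSd : DifferentiableAt ℂ
        (fun q : ℂ => (q * ∫ x in Ici (0:ℝ), ((q + (x:ℂ))⁻¹ : ℂ) ∂μ) ^ ((1:ℂ)/2)) p :=
      hQd.cpow (differentiableAt_const _) hslit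
    have hS0 : (p * ∫ x in Ici (0:ℝ), ((p + (x:ℂ))⁻¹ : ℂ) ∂μ) ^ ((1:ℂ)/2) ≠ 0 :=
      st12_sqrt_ne hQ0
    have hκd : DifferentiableAt ℂ (fun q : ℂ => (sρ:ℂ) * q /
        ((q * ∫ x in Ici (0:ℝ), ((q + (x:ℂ))⁻¹ : ℂ) ∂μ) ^ ((1:ℂ)/2))) p :=
      (((differentiableAt_const _).mul differentiableAt_fun_id)).div hSd hS0
    have hβd : DifferentiableAt ℂ (fun q : ℂ => (sρ:ℂ) * q /
        ((q * ∫ x in Ici (0:ℝ), ((q + (x:ℂ))⁻¹ : ℂ) ∂μ) ^ ((1:ℂ)/2)) - (c:ℂ) * q) p :=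
      hκd.sub ((differentiableAt_const _).mul differentiableAt_fun_id)
    have hexp : DifferentiableAt ℂ (fun q : ℂ => Complex.exp (-((sρ:ℂ) * q /
        ((q * ∫ x in Ici (0:ℝ), ((q + (x:ℂ))⁻¹ : ℂ) ∂μ) ^ ((1:ℂ)/2)) - (c:ℂ) * q) * (r:ℂ))) p :=
      ((hβd.neg).mul_const ((r:ℝ):ℂ)).cexp
    have hκ0 : (sρ:ℂ) * p /
        ((p * ∫ x in Ici (0:ℝ), ((p + (x:ℂ))⁻¹ : ℂ) ∂μ) ^ ((1:ℂ)/2)) ≠ 0 := by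
      apply div_ne_zero _ hS0
      exact mul_ne_zero (by exact_mod_cast ne_of_gt hsρ) hp0
    have htotal := hexp.div (hQd.mul hκd) (mul_ne_zero hQ0 hκ0)
    have hfun : (fun p : ℂ => Complex.exp (-β p * r) / (Q p * κ p)) =
        fun q : ℂ => Complex.exp (-((sρ:ℂ) * q /
          ((q * ∫ x in Ici (0:ℝ), ((q + (x:ℂ))⁻¹ : ℂ) ∂μ) ^ ((1:ℂ)/2)) - (c:ℂ) * q) * (r:ℂ)) /
          ((q * ∫ x in Ici (0:ℝ), ((q + (x:ℂ))⁻¹ : ℂ) ∂μ) * ((sρ:ℂ) * q /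
            ((q * ∫ x in Ici (0:ℝ), ((q + (x:ℂ))⁻¹ : ℂ) ∂μ) ^ ((1:ℂ)/2)))) := by
      funext q
      rw [hβ' q, hκ q, hQ q]
    rw [hfun]
    exact htotal.differentiableWithinAt
  · -- uniform decay
    intro ε hε
    obtain ⟨R₁, hR₁1, hR₁⟩ := st12_Esmall (μ := μ) hfin (η := G/2) (by positivity)
    set q2 : ℝ := Real.sqrt (G/2) with hq2def
    have hq2pos : 0 < q2 := Real.sqrt_pos.mpr (by positivity)
    refine ⟨max R₁ (ε * sρ * q2)⁻¹, lt_of_lt_of_le one_pos (le_trans hR₁1 (le_max_left _ _)),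
      fun p hpre hpabs => ?_⟩
    have hp1 : (1:ℝ) ≤ ‖p‖ := le_trans hR₁1 (le_trans (le_max_left _ _) hpabs)
    have hp0 : p ≠ 0 := by
      intro h; rw [h, norm_zero] at hp1; linarith
    have hEsm := hR₁ p hpre (le_trans (le_max_left _ _) hpabs)
    have hQeq := st12_decomp hfin hpre hp0
    rw [← hGdef] at hQeq
    have hQabs : G/2 ≤ ‖p * ∫ x in Ici (0:ℝ), ((p + (x:ℂ))⁻¹ : ℂ) ∂μ‖ := by
      rw [hQeq]
      have h1 : ‖((G:ℝ):ℂ)‖ - ‖∫ x in Ici (0:ℝ), ((x:ℂ) * (p + x)⁻¹) ∂μ‖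
          ≤ ‖((G:ℝ):ℂ) - ∫ x in Ici (0:ℝ), ((x:ℂ) * (p + x)⁻¹) ∂μ‖ := by
        have := norm_sub_norm_le ((G:ℝ):ℂ) (∫ x in Ici (0:ℝ), ((x:ℂ) * (p + x)⁻¹) ∂μ)
        exact this
      have h2 : ‖((G:ℝ):ℂ)‖ = G := by
        rw [Complex.norm_real, Real.norm_eq_abs, _root_.abs_of_nonneg hG.le]
      linarith
    have hQ0 : p * (∫ x in Ici (0:ℝ), ((p + (x:ℂ))⁻¹ : ℂ) ∂μ) ≠ 0 := by
      intro h; rw [h, norm_zero] at hQabs; linarith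
    have hQquad := st12_Qquad hfin hpre hp0
    have hNquad := st12_Nquad hfin hpre hp0
    have hrel : p * (∫ x in Ici (0:ℝ), ((x:ℂ) * (p + x)⁻¹) ∂μ) =
        p * ((sG:ℂ)^2 - p * ∫ x in Ici (0:ℝ), ((p + (x:ℂ))⁻¹ : ℂ) ∂μ) := by
      rw [hsG2, hQeq]; ring
    have hcore := st12_core hcpos hsG hQ0 hQquad.1 hQquad.2.1 hQquad.2.2 hrel
      hNquad.1 hNquad.2.1 hNquad.2.2
    have hβp : 0 ≤ (β p).re := by
      rw [hβ' p, hcsG]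
      exact hcore
    have hnum : ‖Complex.exp (-β p * r)‖ ≤ 1 := by
      rw [Complex.norm_exp, Real.exp_le_one_iff]
      have hre : (-β p * (r:ℂ)).re = -(β p).re * r := by
        simp [Complex.mul_re]
      rw [hre]
      nlinarith
    have hS2 : ((p * ∫ x in Ici (0:ℝ), ((p + (x:ℂ))⁻¹ : ℂ) ∂μ) ^ ((1:ℂ)/2)) ^ 2 =
        p * ∫ x in Ici (0:ℝ), ((p + (x:ℂ))⁻¹ : ℂ) ∂μ := st12_sq_sqrt hQ0
    have hS0 : (p * ∫ x in Ici (0:ℝ), ((p + (x:ℂ))⁻¹ : ℂ) ∂μ) ^ ((1:ℂ)/2) ≠ 0 :=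
      st12_sqrt_ne hQ0
    have hden_eq : Q p * κ p = (sρ:ℂ) * p *
        ((p * ∫ x in Ici (0:ℝ), ((p + (x:ℂ))⁻¹ : ℂ) ∂μ) ^ ((1:ℂ)/2)) := by
      rw [hκ p, hQ p]
      have hgen : ∀ S bQ : ℂ, S ≠ 0 → S ^ 2 = bQ → bQ * ((sρ:ℂ) * p / S) = (sρ:ℂ) * p * S := by
        intro S bQ h1 h2
        rw [← h2]
        field_simp
      exact hgen _ _ hS0 hS2
    have habsS : q2 ≤ ‖(p * ∫ x in Ici (0:ℝ), ((p + (x:ℂ))⁻¹ : ℂ) ∂μ) ^ ((1:ℂ)/2)‖ := by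
      have h1 : ‖(p * ∫ x in Ici (0:ℝ), ((p + (x:ℂ))⁻¹ : ℂ) ∂μ) ^ ((1:ℂ)/2)‖ ^ 2 =
          ‖p * ∫ x in Ici (0:ℝ), ((p + (x:ℂ))⁻¹ : ℂ) ∂μ‖ := by
        rw [← norm_pow, hS2]
      have h2 : q2 ≤ Real.sqrt (‖(p * ∫ x in Ici (0:ℝ), ((p + (x:ℂ))⁻¹ : ℂ) ∂μ) ^ ((1:ℂ)/2)‖ ^ 2) := by
        rw [hq2def]
        apply Real.sqrt_le_sqrt
        rw [h1]; exact hQabs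
      rwa [Real.sqrt_sq (norm_nonneg _)] at h2
    rw [hden_eq, norm_div, norm_mul, norm_mul, Complex.norm_real, Real.norm_eq_abs, _root_.abs_of_nonneg hsρ.le]
    have hdenpos : 0 < sρ * ‖p‖ * ‖(p * ∫ x in Ici (0:ℝ), ((p + (x:ℂ))⁻¹ : ℂ) ∂μ) ^ ((1:ℂ)/2)‖ := by
      apply mul_pos (mul_pos hsρ (by linarith))
      linarith
    rw [div_le_iff₀ hdenpos]
    have hεinv : (ε * sρ * q2)⁻¹ ≤ ‖p‖ := le_trans (le_max_right _ _) hpabs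
    have hkey : ε⁻¹ ≤ sρ * ‖p‖ * ‖(p * ∫ x in Ici (0:ℝ), ((p + (x:ℂ))⁻¹ : ℂ) ∂μ) ^ ((1:ℂ)/2)‖ := by
      have heq1 : ε⁻¹ = sρ * (ε * sρ * q2)⁻¹ * q2 := by
        field_simp
      rw [heq1]
      apply mul_le_mul (mul_le_mul_of_nonneg_left hεinv hsρ.le) habsS hq2pos.le
      positivity
    have h3 := mul_le_mul_of_nonneg_left hkey hε.le
    rw [mul_inv_cancel₀ (ne_of_gt hε)] at h3
    calc ‖Complex.exp (-β p * r)‖ ≤ 1 := hnum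
    _ ≤ ε * (sρ * ‖p‖ * ‖(p * ∫ x in Ici (0:ℝ), ((p + (x:ℂ))⁻¹ : ℂ) ∂μ) ^ ((1:ℂ)/2)‖) := h3
end

section
/- Let ν be a positive Radon measure on [0,∞) with ∫_{[0,∞)} (1+r)^{−1} ν(dr) < ∞, define A(ω) = ω² ∫_{[0,∞)} (ω²+r²)^{−1} ν(dr) and D(ω) = ω ∫_{[0,∞)} r (ω²+r²)^{−1} ν(dr) for ω > 0. Suppose ν([0,r]) ∼ r^{1−α} l(r) as r → ∞, where 0 < α < 1 and l is slowly varying at infinity. Then A(ω) ∼ [(1−α)π / (2 cos(απ/2))] ω^{1−α} l(ω) and D(ω) ∼ [(1−α)π / (2 sin(απ/2))] ω^{1−α} l(ω) as ω → ∞. -/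
open MeasureTheory Set Real Filter
open scoped ENNReal



lemma real_beta {a b : ℝ} (ha : 0 < a) (hb : 0 < b) :
    ∫ x in (0:ℝ)..1, x ^ (a-1) * (1-x) ^ (b-1) =
      Real.Gamma a * Real.Gamma b / Real.Gamma (a+b) := by
  have key := Complex.Gamma_mul_Gamma_eq_betaIntegral (s := (a:ℂ)) (t := (b:ℂ))
    (by simpa using ha) (by simpa using hb)
  have hbeta : Complex.betaIntegral (a:ℂ) (b:ℂ)
      = ((∫ x in (0:ℝ)..1, x ^ (a-1) * (1-x) ^ (b-1) : ℝ) : ℂ) := by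
    rw [Complex.betaIntegral, ← intervalIntegral.integral_ofReal]
    apply intervalIntegral.integral_congr
    intro x hx
    rw [uIcc_of_le (by norm_num)] at hx
    obtain ⟨hx0, hx1⟩ := hx
    push_cast
    rw [Complex.ofReal_cpow hx0, Complex.ofReal_cpow (by linarith)]
    push_cast
    ring
  rw [hbeta] at key
  have hG : ((Real.Gamma a * Real.Gamma b : ℝ) : ℂ)
      = ((Real.Gamma (a+b) * ∫ x in (0:ℝ)..1, x ^ (a-1) * (1-x) ^ (b-1) : ℝ) : ℂ) := by
    push_cast
    rw [← Complex.Gamma_ofReal, ← Complex.Gamma_ofReal, ← Complex.Gamma_ofReal]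
    push_cast
    exact key
  have := Complex.ofReal_injective hG
  have hGpos : 0 < Real.Gamma (a+b) := Real.Gamma_pos_of_pos (by linarith)
  field_simp
  linarith [this]



lemma phi_image : (fun u : ℝ => u^2 / (1 + u^2)) '' (Ioi 0) = Ioo 0 1 := by
  ext y
  constructor
  · rintro ⟨u, hu, rfl⟩
    have hu0 : (0:ℝ) < u := hu
    constructor
    · positivity
    · rw [div_lt_one (by positivity)]; linarith
  · rintro ⟨hy0, hy1⟩
    have h1y : (0:ℝ) < 1 - y := by linarith
    refine ⟨Real.sqrt (y / (1-y)), ?_, ?_⟩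
    · exact Real.sqrt_pos.mpr (by positivity)
    · show Real.sqrt (y/(1-y)) ^ 2 / (1 + Real.sqrt (y/(1-y)) ^ 2) = y
      rw [Real.sq_sqrt (by positivity)]
      field_simp
      ring

lemma phi_deriv (u : ℝ) (hu : u ∈ Ioi (0:ℝ)) :
    HasDerivWithinAt (fun u : ℝ => u^2 / (1 + u^2)) (2*u / (1+u^2)^2) (Ioi 0) u := by
  have h : HasDerivAt (fun u : ℝ => u^2 / (1 + u^2)) (2*u / (1+u^2)^2) u := by
    have h1 : HasDerivAt (fun u : ℝ => u^2) (2*u) u := by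
      simpa using hasDerivAt_pow 2 u
    have h2 : HasDerivAt (fun u : ℝ => 1 + u^2) (2*u) u := by
      simpa using (hasDerivAt_pow 2 u).const_add 1
    have hne : (1 + u^2) ≠ 0 := by positivity
    have := h1.div h2 hne
    refine this.congr_deriv ?_
    ring
  exact h.hasDerivWithinAt

lemma phi_inj : InjOn (fun u : ℝ => u^2 / (1 + u^2)) (Ioi 0) := by
  have : StrictMonoOn (fun u : ℝ => u^2 / (1 + u^2)) (Ioi 0) := by
    intro u hu v hv huv
    have hu0 : (0:ℝ) < u := hu
    rw [div_lt_div_iff₀ (by positivity) (by positivity)]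
    nlinarith
  exact this.injOn

lemma beta_Ioi {a b : ℝ} (ha : 0 < a) (hb : 0 < b) :
    ∫ u in Ioi (0:ℝ), u ^ (2*a-1) * (1+u^2) ^ (-(a+b)) =
      Real.Gamma a * Real.Gamma b / Real.Gamma (a+b) / 2 := by
  have real_beta := real_beta ha hb
  have key := integral_image_eq_integral_abs_deriv_smul (f' := fun u : ℝ => 2*u/(1+u^2)^2)
    measurableSet_Ioi phi_deriv phi_inj (fun x : ℝ => x ^ (a-1) * (1-x) ^ (b-1))
  rw [phi_image] at key
  have lhs : ∫ x in Ioo (0:ℝ) 1, x ^ (a-1) * (1-x) ^ (b-1)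
      = Real.Gamma a * Real.Gamma b / Real.Gamma (a+b) := by
    rw [← real_beta, intervalIntegral.integral_of_le (by norm_num),
      ← integral_Ioc_eq_integral_Ioo]
  rw [lhs] at key
  have rhs : ∫ u in Ioi (0:ℝ), |2*u/(1+u^2)^2| •
        ((u^2/(1+u^2)) ^ (a-1) * (1-u^2/(1+u^2)) ^ (b-1))
      = 2 * ∫ u in Ioi (0:ℝ), u ^ (2*a-1) * (1+u^2) ^ (-(a+b)) := by
    rw [← integral_const_mul]
    apply setIntegral_congr_fun measurableSet_Ioi
    intro u hu
    have hu0 : (0:ℝ) < u := hu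
    simp only [smul_eq_mul]
    have hd : (0:ℝ) < 1 + u^2 := by positivity
    set v : ℝ := 1 + u^2 with hvdef
    have hv : (0:ℝ) < v := hd
    have h1 : 1 - u^2/v = v⁻¹ := by rw [hvdef]; field_simp; ring
    have h2 : |2*u/v^2| = 2*u/v^2 := abs_of_pos (by positivity)
    have e1 : (u^2/v) ^ (a-1) = u ^ (2*a-2) * v ^ (-(a-1)) := by
      rw [div_rpow (by positivity) hv.le, ← Real.rpow_natCast u 2,
        ← Real.rpow_mul hu0.le, div_eq_mul_inv, ← Real.rpow_neg hv.le,
        show (((2:ℕ):ℝ))*(a-1) = 2*a-2 by push_cast; ring]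
    have e3 : (v⁻¹) ^ (b-1) = v ^ (-(b-1)) := by
      rw [← Real.rpow_neg_one v, ← Real.rpow_mul hv.le]
      norm_num
    have e4 : 2*u/v^2 = 2 * u * v ^ (-(2:ℝ)) := by
      rw [div_eq_mul_inv, ← Real.rpow_natCast v 2, ← Real.rpow_neg hv.le]
      norm_num
    have eu : u * u ^ (2*a-2) = u ^ (2*a-1) := by
      rw [mul_comm, ← Real.rpow_add_one hu0.ne' (2*a-2),
        show (2*a-2+1 : ℝ) = 2*a-1 by ring]
    have ev : v ^ (-(2:ℝ)) * (v ^ (-(a-1)) * v ^ (-(b-1))) = v ^ (-(a+b)) := by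
      rw [← Real.rpow_add hv, ← Real.rpow_add hv]
      ring_nf
    rw [h1, h2, e1, e3, e4]
    calc 2 * u * v ^ (-(2:ℝ)) * (u ^ (2*a-2) * v ^ (-(a-1)) * v ^ (-(b-1)))
        = 2 * (u * u ^ (2*a-2)) * (v ^ (-(2:ℝ)) * (v ^ (-(a-1)) * v ^ (-(b-1)))) := by ring
      _ = 2 * (u ^ (2*a-1) * v ^ (-(a+b))) := by rw [eu, ev]; ring
  rw [rhs] at key
  linarith


-- generic kernel integrability
lemma integrableOn_ker {p m : ℝ} (hp : -1 < p) (hm : p + 1 < 2*m) :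
    IntegrableOn (fun u : ℝ => u ^ p * (1+u^2) ^ (-m)) (Ioi (0:ℝ)) := by
  have hm0 : 0 < m := by linarith
  have hcont : ContinuousOn (fun u : ℝ => u ^ p * (1+u^2) ^ (-m)) (Ioi 0) := by
    apply ContinuousOn.mul
    · exact continuousOn_id.rpow_const (fun x hx => Or.inl (ne_of_gt hx))
    · exact (((continuous_const.add (continuous_pow 2)).rpow_const
        (fun x => Or.inl (by positivity : (0:ℝ) < 1 + x^2).ne')).continuousOn)
  have hmeas : AEStronglyMeasurable (fun u : ℝ => u ^ p * (1+u^2) ^ (-m))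
      (volume.restrict (Ioi (0:ℝ))) :=
    hcont.aestronglyMeasurable measurableSet_Ioi
  have h1 : IntegrableOn (fun u : ℝ => u ^ p * (1+u^2) ^ (-m)) (Ioc (0:ℝ) 1) := by
    have hg : IntegrableOn (fun u : ℝ => u ^ p) (Ioc (0:ℝ) 1) := by
      have := intervalIntegral.intervalIntegrable_rpow' (a := 0) (b := 1) hp
      rwa [intervalIntegrable_iff_integrableOn_Ioc_of_le (by norm_num)] at this
    refine Integrable.mono hg (hmeas.mono_set Ioc_subset_Ioi_self) ?_
    filter_upwards [ae_restrict_mem measurableSet_Ioc] with u hu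
    obtain ⟨hu0, _⟩ := hu
    have h2 : (1+u^2) ^ (-m) ≤ 1 := by
      have := Real.rpow_le_rpow_of_nonpos one_pos
        (show (1:ℝ) ≤ 1+u^2 by nlinarith) (neg_nonpos.mpr hm0.le)
      simpa using this
    rw [Real.norm_eq_abs, Real.norm_eq_abs, abs_of_nonneg (by positivity),
      abs_of_nonneg (by positivity)]
    nlinarith [Real.rpow_nonneg hu0.le p, Real.rpow_nonneg (show (0:ℝ) ≤ 1+u^2 by positivity) (-m)]
  have h2 : IntegrableOn (fun u : ℝ => u ^ p * (1+u^2) ^ (-m)) (Ioi (1:ℝ)) := by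
    have hg : IntegrableOn (fun u : ℝ => u ^ (p - 2*m)) (Ioi (1:ℝ)) :=
      integrableOn_Ioi_rpow_of_lt (by linarith) one_pos
    refine Integrable.mono hg (hmeas.mono_set (Ioi_subset_Ioi (by norm_num))) ?_
    filter_upwards [ae_restrict_mem measurableSet_Ioi] with u hu
    have hu1 : (1:ℝ) < u := hu
    have hu0 : (0:ℝ) < u := by linarith
    have hb : (1+u^2) ^ (-m) ≤ u ^ (-(2*m)) := by
      rw [show u ^ (-(2*m)) = (u^2) ^ (-m) by
        rw [← Real.rpow_natCast u 2, ← Real.rpow_mul hu0.le]; push_cast; ring_nf]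
      exact Real.rpow_le_rpow_of_nonpos (by positivity) (by nlinarith) (by linarith)
    rw [Real.norm_eq_abs, Real.norm_eq_abs, abs_of_nonneg (by positivity),
      abs_of_nonneg (by positivity), show p - 2*m = p + -(2*m) by ring,
      Real.rpow_add hu0]
    exact mul_le_mul_of_nonneg_left hb (Real.rpow_nonneg hu0.le p)
  have : IntegrableOn (fun u : ℝ => u ^ p * (1+u^2) ^ (-m)) (Ioc (0:ℝ) 1 ∪ Ioi 1) :=
    h1.union h2
  refine this.mono_set ?_
  intro x hx
  rcases le_or_gt x 1 with h | h
  · exact Or.inl ⟨hx, h⟩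
  · exact Or.inr h


lemma Gamma_two' : Real.Gamma 2 = 1 := by
  rw [show (2:ℝ) = 1+1 by norm_num, Real.Gamma_add_one one_ne_zero, Real.Gamma_one, mul_one]

lemma IA_val {α : ℝ} (hα0 : 0 < α) (hα1 : α < 1) :
    ∫ u in Ioi (0:ℝ), 2*u/(1+u^2)^2 * u ^ (1-α) = (1-α)*π/(2*Real.cos (α*π/2)) := by
  have ha : 0 < (3-α)/2 := by linarith
  have hb : 0 < (1+α)/2 := by linarith
  have key := beta_Ioi ha hb
  rw [show 2*((3-α)/2)-1 = 2-α by ring, show (3-α)/2 + (1+α)/2 = 2 by ring] at key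
  have congr1 : ∫ u in Ioi (0:ℝ), 2*u/(1+u^2)^2 * u ^ (1-α)
      = 2 * ∫ u in Ioi (0:ℝ), u ^ (2-α) * (1+u^2) ^ (-(2:ℝ)) := by
    rw [← integral_const_mul]
    apply setIntegral_congr_fun measurableSet_Ioi
    intro u hu
    dsimp only
    have hu0 : (0:ℝ) < u := hu
    have hd : (0:ℝ) < 1 + u^2 := by positivity
    have e1 : u * u ^ (1-α) = u ^ (2-α) := by
      rw [mul_comm, ← Real.rpow_add_one hu0.ne' (1-α), show (1-α+1:ℝ) = 2-α by ring]
    have e2 : (1+u^2) ^ (-(2:ℝ)) = ((1+u^2)^2)⁻¹ := by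
      rw [← Real.rpow_natCast (1+u^2) 2, ← Real.rpow_neg hd.le]
      norm_num
    rw [e2, ← e1]
    field_simp
  rw [congr1, key, Gamma_two',
    show (3-α)/2 = (1-α)/2 + 1 by ring,
    Real.Gamma_add_one (ne_of_gt (show (0:ℝ) < (1-α)/2 by linarith)),
    show (1+α)/2 = 1 - (1-α)/2 by ring,
    mul_assoc, Real.Gamma_mul_Gamma_one_sub,
    show π * ((1-α)/2) = π/2 - α*π/2 by ring, Real.sin_pi_div_two_sub]
  have hcos : 0 < Real.cos (α*π/2) := by
    apply Real.cos_pos_of_mem_Ioo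
    constructor
    · nlinarith [Real.pi_pos]
    · nlinarith [Real.pi_pos]
  field_simp

lemma ID_val {α : ℝ} (hα0 : 0 < α) (hα1 : α < 1) :
    ∫ u in Ioi (0:ℝ), (u^2-1)/(1+u^2)^2 * u ^ (1-α) = (1-α)*π/(2*Real.sin (α*π/2)) := by
  have ha : 0 < (2-α)/2 := by linarith
  have hb1 : 0 < α/2 := by linarith
  have hb2 : 0 < (2+α)/2 := by linarith
  have key1 := beta_Ioi ha hb1
  have key2 := beta_Ioi ha hb2
  rw [show 2*((2-α)/2)-1 = 1-α by ring, show (2-α)/2 + α/2 = 1 by ring] at key1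
  rw [show 2*((2-α)/2)-1 = 1-α by ring, show (2-α)/2 + (2+α)/2 = 2 by ring] at key2
  have int1 : IntegrableOn (fun u : ℝ => u ^ (1-α) * (1+u^2) ^ (-(1:ℝ))) (Ioi (0:ℝ)) :=
    integrableOn_ker (by linarith) (by linarith)
  have int2 : IntegrableOn (fun u : ℝ => u ^ (1-α) * (1+u^2) ^ (-(2:ℝ))) (Ioi (0:ℝ)) :=
    integrableOn_ker (by linarith) (by linarith)
  have congr1 : ∫ u in Ioi (0:ℝ), (u^2-1)/(1+u^2)^2 * u ^ (1-α)
      = ∫ u in Ioi (0:ℝ), (u ^ (1-α) * (1+u^2) ^ (-(1:ℝ))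
          - 2 * (u ^ (1-α) * (1+u^2) ^ (-(2:ℝ)))) := by
    apply setIntegral_congr_fun measurableSet_Ioi
    intro u hu
    dsimp only
    have hu0 : (0:ℝ) < u := hu
    have hd : (0:ℝ) < 1 + u^2 := by positivity
    have e2 : (1+u^2) ^ (-(2:ℝ)) = ((1+u^2)^2)⁻¹ := by
      rw [← Real.rpow_natCast (1+u^2) 2, ← Real.rpow_neg hd.le]
      norm_num
    have e3 : (1+u^2) ^ (-(1:ℝ)) = (1+u^2)⁻¹ := by
      rw [Real.rpow_neg_one]
    rw [e2, e3]
    field_simp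
    ring
  have refl2 : Real.Gamma (1 - α/2) * Real.Gamma (α/2) = π / Real.sin (α*π/2) := by
    rw [mul_comm, Real.Gamma_mul_Gamma_one_sub, show π * (α/2) = α*π/2 by ring]
  have e : Real.Gamma (1 - α/2) * (α/2 * Real.Gamma (α/2))
      = α/2 * (π / Real.sin (α*π/2)) := by
    rw [← refl2]; ring
  rw [congr1, integral_sub int1 (int2.const_mul 2), integral_const_mul, key1, key2,
    show (2-α)/2 = 1 - α/2 by ring, Gamma_two', Real.Gamma_one,
    show (2+α)/2 = α/2 + 1 by ring, Real.Gamma_add_one (ne_of_gt hb1), refl2, e]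
  have hsin : 0 < Real.sin (α*π/2) := by
    apply Real.sin_pos_of_pos_of_lt_pi
    · nlinarith [Real.pi_pos]
    · nlinarith [Real.pi_pos]
  field_simp


lemma growth_of_doubling {F : ℝ → ℝ} (hF : Monotone F) {σ : ℝ} (hσ : 0 ≤ σ) {X : ℝ}
    (hX : 1 ≤ X) (hFnn : ∀ x, X ≤ x → 0 ≤ F x)
    (hdb : ∀ x, X ≤ x → F (2*x) ≤ 2^σ * F x) :
    ∀ x, X ≤ x → ∀ u, 1 ≤ u → F (x*u) ≤ 2^σ * u^σ * F x := by
  have hpow : ∀ n : ℕ, ∀ x, X ≤ x → F (2^n * x) ≤ (2^σ)^n * F x := by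
    intro n
    induction n with
    | zero => intro x hx; simpa using le_refl (F x)
    | succ n ih =>
      intro x hx
      have hx0 : (0:ℝ) < x := lt_of_lt_of_le one_pos (le_trans hX hx)
      have h2n : (1:ℝ) ≤ 2^n := one_le_pow₀ (by norm_num)
      have hxn : X ≤ 2^n * x := le_trans hx (le_mul_of_one_le_left hx0.le h2n)
      have step := hdb (2^n * x) hxn
      have heq : F (2^(n+1) * x) = F (2*(2^n * x)) := by ring_nf
      rw [heq]
      calc F (2*(2^n * x)) ≤ 2^σ * F (2^n * x) := step
        _ ≤ 2^σ * ((2^σ)^n * F x) :=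
            mul_le_mul_of_nonneg_left (ih x hx) (Real.rpow_nonneg (by norm_num) σ)
        _ = (2^σ)^(n+1) * F x := by ring
  intro x hx u hu
  have hx0 : (0:ℝ) < x := lt_of_lt_of_le one_pos (le_trans hX hx)
  have hu0 : (0:ℝ) < u := lt_of_lt_of_le one_pos hu
  set n : ℕ := ⌊Real.logb 2 u⌋₊ with hn
  have hlog0 : 0 ≤ Real.logb 2 u := Real.logb_nonneg (by norm_num) hu
  have hnle : (n:ℝ) ≤ Real.logb 2 u := Nat.floor_le hlog0
  have hlt : Real.logb 2 u < (n:ℝ) + 1 := Nat.lt_floor_add_one _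
  have h2n_le : (2:ℝ)^(n:ℕ) ≤ u := by
    have h := Real.rpow_le_rpow_of_exponent_le (by norm_num : (1:ℝ) ≤ 2) hnle
    rwa [Real.rpow_logb (by norm_num) (by norm_num) hu0, Real.rpow_natCast] at h
  have hu_le : u ≤ (2:ℝ)^(n+1 : ℕ) := by
    have h := Real.rpow_le_rpow_of_exponent_le (by norm_num : (1:ℝ) ≤ 2) hlt.le
    rw [Real.rpow_logb (by norm_num) (by norm_num) hu0,
      show ((n:ℝ)+1) = ((n+1 : ℕ) : ℝ) by push_cast; ring, Real.rpow_natCast] at h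
    exact h
  have e : ((2:ℝ)^σ)^n = ((2:ℝ)^(n:ℕ))^σ := by
    rw [← Real.rpow_natCast ((2:ℝ)^σ) n, ← Real.rpow_mul (by norm_num : (0:ℝ) ≤ 2),
      ← Real.rpow_natCast (2:ℝ) n, ← Real.rpow_mul (by norm_num : (0:ℝ) ≤ 2), mul_comm]
  calc F (x*u) ≤ F (2^(n+1) * x) := by
        apply hF
        calc x*u ≤ x * 2^(n+1) := mul_le_mul_of_nonneg_left hu_le hx0.le
          _ = 2^(n+1) * x := by ring
    _ ≤ (2^σ)^(n+1) * F x := hpow (n+1) x hx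
    _ = 2^σ * (((2:ℝ)^(n:ℕ))^σ * F x) := by rw [pow_succ, ← e]; ring
    _ ≤ 2^σ * (u^σ * F x) := by
        apply mul_le_mul_of_nonneg_left _ (Real.rpow_nonneg (by norm_num) σ)
        exact mul_le_mul_of_nonneg_right
          (Real.rpow_le_rpow (by positivity) h2n_le hσ) (hFnn x hx)
    _ = 2^σ * u^σ * F x := by ring


lemma main_conv (F : ℝ → ℝ) (hFmeas : Measurable F) (hFmono : Monotone F)
    (hFnn : ∀ x, 0 ≤ F x)
    {α : ℝ} (hα0 : 0 < α) (hα1 : α < 1) (l : ℝ → ℝ)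
    (hlpos : ∀ x : ℝ, 0 < x → 0 < l x)
    (hslow : ∀ c : ℝ, 0 < c → Tendsto (fun x : ℝ => l (c * x) / l x) atTop (nhds 1))
    (hasymp : Tendsto (fun r : ℝ => F r / (r ^ (1 - α) * l r)) atTop (nhds 1))
    (q : ℝ → ℝ) (hq : Measurable q) (hqb : ∀ u, 0 < u → |q u| ≤ (1+u^2)⁻¹) :
    Tendsto (fun ω : ℝ => ∫ u in Ioi (0:ℝ), q u * F (ω*u) / (ω ^ (1-α) * l ω)) atTop
      (nhds (∫ u in Ioi (0:ℝ), q u * u ^ (1-α))) := by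
  set G : ℝ → ℝ := fun x => x ^ (1-α) * l x with hGdef
  have hGpos : ∀ x : ℝ, 0 < x → 0 < G x := fun x hx =>
    mul_pos (Real.rpow_pos_of_pos hx _) (hlpos x hx)
  -- ratio limit for each fixed scaling constant
  have hcomp : ∀ c : ℝ, 0 < c →
      Tendsto (fun x => F (c*x) / G x) atTop (nhds (c ^ (1-α))) := by
    intro c hc
    have hmul : Tendsto (fun x : ℝ => c * x) atTop atTop :=
      Tendsto.const_mul_atTop hc tendsto_id
    have h1 : Tendsto (fun x => F (c*x) / G (c*x)) atTop (nhds 1) := hasymp.comp hmul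
    have h2 : Tendsto (fun x => G (c*x) / G x) atTop (nhds (c ^ (1-α))) := by
      have h2' := (hslow c hc).const_mul (c ^ (1-α))
      rw [mul_one] at h2'
      apply Tendsto.congr' _ h2'
      filter_upwards [eventually_gt_atTop 0] with x hx
      have e : (c*x) ^ (1-α) = c ^ (1-α) * x ^ (1-α) := Real.mul_rpow hc.le hx.le
      have hlx : l x ≠ 0 := (hlpos x hx).ne'
      have hx1 : x ^ (1-α) ≠ 0 := (Real.rpow_pos_of_pos hx _).ne'
      show c ^ (1-α) * (l (c*x) / l x) = G (c*x) / G x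
      rw [hGdef]
      simp only
      rw [e]
      field_simp
    have h3 := h1.mul h2
    rw [one_mul] at h3
    apply Tendsto.congr' _ h3
    filter_upwards [eventually_gt_atTop 0] with x hx
    have hGcx : G (c*x) ≠ 0 := (hGpos _ (mul_pos hc hx)).ne'
    have hGx : G x ≠ 0 := (hGpos _ hx).ne'
    show F (c*x) / G (c*x) * (G (c*x) / G x) = F (c*x) / G x
    field_simp
  -- eventual positivity and comparison with G
  have hFGev : ∀ᶠ x in atTop, F x / G x ∈ Ioo (1/2 : ℝ) 2 :=
    hasymp (Ioo_mem_nhds (by norm_num) (by norm_num))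
  have hupper : ∀ᶠ x in atTop, F x ≤ 2 * G x := by
    filter_upwards [hFGev, eventually_gt_atTop 0] with x hx hx0
    have := hx.2
    have hG := hGpos x hx0
    rw [div_lt_iff₀ hG] at this
    linarith
  have hlower : ∀ᶠ x in atTop, 0 < F x := by
    filter_upwards [hFGev, eventually_gt_atTop 0] with x hx hx0
    have := hx.1
    have hG := hGpos x hx0
    rw [lt_div_iff₀ hG] at this
    linarith
  set σ : ℝ := 1 - α/2 with hσdef
  have hσ0 : 0 < σ := by rw [hσdef]; linarith
  have hσ1 : σ < 1 := by rw [hσdef]; linarith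
  have hσα : 1 - α < σ := by rw [hσdef]; linarith
  -- doubling
  have hdoub : Tendsto (fun x => F (2*x) / F x) atTop (nhds ((2:ℝ) ^ (1-α))) := by
    have h := (hcomp 2 two_pos).div hasymp one_ne_zero
    rw [div_one] at h
    apply Tendsto.congr' _ h
    filter_upwards [hlower, eventually_gt_atTop 0] with x hFx hx0
    have hGx : G x ≠ 0 := (hGpos _ hx0).ne'
    show F (2*x) / G x / (F x / G x) = F (2*x) / F x
    field_simp
  have hdb_ev : ∀ᶠ x in atTop, F (2*x) ≤ 2^σ * F x := by
    have hlt : (2:ℝ) ^ (1-α) < 2^σ :=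
      Real.rpow_lt_rpow_of_exponent_lt one_lt_two (by linarith)
    filter_upwards [hdoub.eventually_lt_const hlt, hlower] with x hx hFx
    rw [div_lt_iff₀ hFx] at hx
    linarith
  obtain ⟨X₀, hX₀⟩ := eventually_atTop.mp ((hdb_ev.and hupper).and hlower)
  set X : ℝ := max X₀ 1 with hXdef
  have hX1 : (1:ℝ) ≤ X := le_max_right _ _
  have hXprop : ∀ x, X ≤ x → (F (2*x) ≤ 2^σ * F x ∧ F x ≤ 2 * G x) ∧ 0 < F x :=
    fun x hx => hX₀ x (le_trans (le_max_left _ _) hx)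
  have hgrow := growth_of_doubling hFmono hσ0.le hX1 (fun x _ => hFnn x)
    (fun x hx => (hXprop x hx).1.1)
  -- dominated convergence
  set bound : ℝ → ℝ := fun u => 2^(σ+1) * (max 1 u ^ σ * (1+u^2)⁻¹) with hbdef
  have hcont_h : Continuous (fun u : ℝ => max 1 u ^ σ * (1+u^2)⁻¹) := by
    apply Continuous.mul
    · apply Continuous.rpow_const (continuous_const.max continuous_id)
      intro x
      exact Or.inl (ne_of_gt (lt_of_lt_of_le one_pos (le_max_left _ _)))
    · exact (continuous_const.add (continuous_pow 2)).inv₀ (fun x => (by positivity : (0:ℝ) < 1 + x^2).ne')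
  have hbint : IntegrableOn bound (Ioi (0:ℝ)) volume := by
    apply Integrable.const_mul
    have part1 : IntegrableOn (fun u : ℝ => max 1 u ^ σ * (1+u^2)⁻¹) (Ioc (0:ℝ) 1) := by
      exact ((hcont_h.continuousOn).integrableOn_compact
        (isCompact_Icc : IsCompact (Icc (0:ℝ) 1))).mono_set Ioc_subset_Icc_self
    have part2 : IntegrableOn (fun u : ℝ => max 1 u ^ σ * (1+u^2)⁻¹) (Ioi (1:ℝ)) := by
      have hker := (integrableOn_ker (p := σ) (m := 1) (by linarith) (by linarith)).mono_set
        (Ioi_subset_Ioi zero_le_one)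
      apply Integrable.mono hker (hcont_h.aestronglyMeasurable.restrict)
      filter_upwards [ae_restrict_mem measurableSet_Ioi] with u hu
      have hu1 : (1:ℝ) < u := hu
      have hu0 : (0:ℝ) < u := by linarith
      rw [max_eq_right hu1.le, Real.rpow_neg_one]
    have := part1.union part2
    apply this.mono_set
    intro x hx
    rcases le_or_gt x 1 with h | h
    · exact Or.inl ⟨hx, h⟩
    · exact Or.inr h
  apply tendsto_integral_filter_of_dominated_convergence bound
  · apply Eventually.of_forall
    intro ω
    exact ((hq.mul (hFmeas.comp (measurable_id.const_mul ω))).div_const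
      _).aestronglyMeasurable.restrict
  · filter_upwards [eventually_ge_atTop X] with ω hωX
    have hω0 : (0:ℝ) < ω := lt_of_lt_of_le (lt_of_lt_of_le one_pos hX1) hωX
    have hGω : 0 < G ω := hGpos ω hω0
    filter_upwards [ae_restrict_mem measurableSet_Ioi] with u hu
    have hu0 : (0:ℝ) < u := hu
    have hH : F (ω*u) / G ω ≤ 2^(σ+1) * max 1 u ^ σ := by
      rcases le_or_gt u 1 with h1 | h1
      · rw [max_eq_left h1]
        have hF1 : F (ω*u) ≤ F ω := hFmono (mul_le_of_le_one_right hω0.le h1)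
        have hF2 : F ω ≤ 2 * G ω := (hXprop ω hωX).1.2
        rw [div_le_iff₀ hGω, Real.one_rpow]
        have h2σ : (2:ℝ) ≤ 2^(σ+1) := by
          nth_rewrite 1 [show (2:ℝ) = 2^(1:ℝ) by rw [Real.rpow_one]]
          exact Real.rpow_le_rpow_of_exponent_le one_le_two (by linarith)
        nlinarith [hGω.le]
      · rw [max_eq_right h1.le]
        have hg := hgrow ω hωX u h1.le
        have hF2 : F ω ≤ 2 * G ω := (hXprop ω hωX).1.2
        rw [div_le_iff₀ hGω, Real.rpow_add_one two_ne_zero σ]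
        have huσ : (0:ℝ) ≤ u^σ := Real.rpow_nonneg hu0.le σ
        have h2σ : (0:ℝ) ≤ 2^σ := Real.rpow_nonneg (by norm_num) σ
        nlinarith [mul_le_mul_of_nonneg_left hF2 (mul_nonneg h2σ huσ), hFnn ω]
    have hnorm : ‖q u * F (ω*u) / G ω‖ = |q u| * (F (ω*u) / G ω) := by
      rw [Real.norm_eq_abs, mul_div_assoc, abs_mul]
      congr 1
      exact abs_of_nonneg (div_nonneg (hFnn _) hGω.le)
    rw [hnorm, hbdef]
    calc |q u| * (F (ω*u) / G ω) ≤ (1+u^2)⁻¹ * (2^(σ+1) * max 1 u ^ σ) := by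
          apply mul_le_mul (hqb u hu0) hH (div_nonneg (hFnn _) hGω.le) (by positivity)
      _ = 2^(σ+1) * (max 1 u ^ σ * (1+u^2)⁻¹) := by ring
  · exact hbint
  · filter_upwards [ae_restrict_mem measurableSet_Ioi] with u hu
    have hu0 : (0:ℝ) < u := hu
    have h := (hcomp u hu0).const_mul (q u)
    apply h.congr
    intro ω
    rw [mul_comm u ω, mul_div_assoc]


lemma Ik2 {ω : ℝ} (hω : 0 < ω) : Integrable (fun s : ℝ => (ω^2+s^2)⁻¹) := by
  have base : Integrable (fun x : ℝ => (1+x^2)⁻¹) := integrable_inv_one_add_sq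
  have h0 : Integrable (fun s : ℝ => (1+(ω⁻¹*s)^2)⁻¹) :=
    (integrable_comp_mul_left_iff (fun x : ℝ => (1+x^2)⁻¹)
      (inv_ne_zero hω.ne')).mpr base
  have h1 : Integrable (fun s : ℝ => (ω^2)⁻¹ * (1+(ω⁻¹*s)^2)⁻¹) := h0.const_mul _
  apply h1.congr
  apply ae_of_all
  intro s
  have h2 : (0:ℝ) < ω^2 + s^2 := by positivity
  field_simp

lemma Ik3 {ω : ℝ} (hω : 0 < ω) : Integrable (fun s : ℝ => ((ω^2+s^2)^2)⁻¹) := by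
  apply Integrable.mono ((Ik2 hω).const_mul (ω^2)⁻¹)
  · apply Continuous.aestronglyMeasurable
    exact ((continuous_const.add (continuous_pow 2)).pow 2).inv₀
      (fun s => (by positivity : (0:ℝ) < (ω^2+s^2)^2).ne')
  · apply ae_of_all
    intro s
    have h2 : (0:ℝ) < ω^2 + s^2 := by positivity
    have hω2 : (0:ℝ) < ω^2 := by positivity
    rw [Real.norm_eq_abs, Real.norm_eq_abs, abs_of_nonneg (by positivity),
      abs_of_nonneg (show (0:ℝ) ≤ (ω^2)⁻¹ * (ω^2+s^2)⁻¹ by positivity)]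
    rw [inv_eq_one_div ((ω^2+s^2)^2), div_le_iff₀ (by positivity)]
    have e : (ω^2)⁻¹ * (ω^2+s^2)⁻¹ * (ω^2+s^2)^2 = (ω^2)⁻¹ * (ω^2+s^2) := by
      field_simp
    rw [e]
    have : (1:ℝ) ≤ (ω^2)⁻¹ * (ω^2+s^2) := by
      rw [inv_mul_eq_div, le_div_iff₀ hω2]
      nlinarith
    linarith

lemma Ik1 {ω : ℝ} (hω : 0 < ω) : Integrable (fun s : ℝ => 2*s/(ω^2+s^2)^2) := by
  apply Integrable.mono ((Ik2 hω).const_mul (1+(ω^2)⁻¹))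
  · apply Continuous.aestronglyMeasurable
    exact (continuous_const.mul continuous_id).div
      ((continuous_const.add (continuous_pow 2)).pow 2) (fun s => by positivity)
  · apply ae_of_all
    intro s
    have h2 : (0:ℝ) < ω^2 + s^2 := by positivity
    have hω2 : (0:ℝ) < ω^2 := by positivity
    rw [Real.norm_eq_abs, Real.norm_eq_abs, abs_div,
      abs_of_nonneg (show (0:ℝ) ≤ (ω^2+s^2)^2 by positivity),
      abs_of_nonneg (show (0:ℝ) ≤ (1+(ω^2)⁻¹) * (ω^2+s^2)⁻¹ by positivity)]
    rw [div_le_iff₀ (by positivity)]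
    have e : (1+(ω^2)⁻¹) * (ω^2+s^2)⁻¹ * (ω^2+s^2)^2 = (1+(ω^2)⁻¹) * (ω^2+s^2) := by
      field_simp
    rw [e]
    have h3 : |2*s| ≤ 1 + s^2 := by
      rw [abs_mul, abs_two]
      nlinarith [sq_abs s, sq_nonneg (|s| - 1), abs_nonneg s]
    have h4 : (1:ℝ) + s^2 ≤ (1+(ω^2)⁻¹) * (ω^2+s^2) := by
      have hinv : (ω^2)⁻¹ * ω^2 = 1 := by field_simp
      nlinarith [sq_nonneg s, hω2.le, mul_nonneg (inv_nonneg.mpr hω2.le) (sq_nonneg s)]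
    linarith

lemma tend_aux {ω : ℝ} (hω : 0 < ω) :
    Tendsto (fun s : ℝ => ω^2 + s^2) atTop atTop :=
  tendsto_atTop_add_const_left _ _ (tendsto_pow_atTop two_ne_zero)

lemma ftcK1 {ω : ℝ} (hω : 0 < ω) (r : ℝ) :
    ∫ s in Ioi r, 2*s/(ω^2+s^2)^2 = (ω^2+r^2)⁻¹ := by
  have hderiv : ∀ x ∈ Ici r, HasDerivAt (fun s : ℝ => -(ω^2+s^2)⁻¹)
      (2*x/(ω^2+x^2)^2) x := by
    intro x _
    have h2 : HasDerivAt (fun s : ℝ => ω^2+s^2) (2*x) x := by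
      simpa using (hasDerivAt_pow 2 x).const_add (ω^2)
    have hne : (ω^2+x^2) ≠ 0 := by positivity
    have := (h2.inv hne).neg
    refine this.congr_deriv ?_
    ring
  have htend : Tendsto (fun s : ℝ => -(ω^2+s^2)⁻¹) atTop (nhds 0) := by
    rw [show (0:ℝ) = -0 by norm_num]
    exact (Tendsto.comp tendsto_inv_atTop_zero (tend_aux hω)).neg
  have := integral_Ioi_of_hasDerivAt_of_tendsto' hderiv ((Ik1 hω).integrableOn) htend
  rw [this]
  ring

lemma ftcG {ω : ℝ} (hω : 0 < ω) (r : ℝ) :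
    ∫ s in Ioi r, ((ω^2+s^2)⁻¹ - 2*ω^2*((ω^2+s^2)^2)⁻¹) = r/(ω^2+r^2) := by
  have hderiv : ∀ x ∈ Ici r, HasDerivAt (fun s : ℝ => -(s/(ω^2+s^2)))
      ((ω^2+x^2)⁻¹ - 2*ω^2*((ω^2+x^2)^2)⁻¹) x := by
    intro x _
    have h2 : HasDerivAt (fun s : ℝ => ω^2+s^2) (2*x) x := by
      simpa using (hasDerivAt_pow 2 x).const_add (ω^2)
    have hne : (ω^2+x^2) ≠ 0 := by positivity
    have := ((hasDerivAt_id x).div h2 hne).neg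
    refine this.congr_deriv ?_
    simp only [id]
    field_simp
    ring
  have hint : Integrable (fun s : ℝ => (ω^2+s^2)⁻¹ - 2*ω^2*((ω^2+s^2)^2)⁻¹) :=
    (Ik2 hω).sub ((Ik3 hω).const_mul _)
  have htend : Tendsto (fun s : ℝ => -(s/(ω^2+s^2))) atTop (nhds 0) := by
    rw [show (0:ℝ) = -0 by norm_num]
    apply Tendsto.neg
    apply squeeze_zero' (g := fun s : ℝ => s⁻¹)
    · filter_upwards [eventually_gt_atTop 0] with s hs
      positivity
    · filter_upwards [eventually_gt_atTop 0] with s hs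
      rw [div_le_iff₀ (by positivity), inv_mul_eq_div, le_div_iff₀ hs]
      nlinarith
    · exact tendsto_inv_atTop_zero
  have := integral_Ioi_of_hasDerivAt_of_tendsto' hderiv hint.integrableOn htend
  rw [this]
  ring

lemma K2anti {ω : ℝ} (hω : 0 < ω) :
    Antitone (fun r : ℝ => ∫ s in Ioi r, (ω^2+s^2)⁻¹) := by
  intro a b hab
  apply setIntegral_mono_set (Ik2 hω).integrableOn
  · apply ae_of_all
    intro s
    positivity
  · exact HasSubset.Subset.eventuallyLE (Ioi_subset_Ioi hab)

lemma K3anti {ω : ℝ} (hω : 0 < ω) :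
    Antitone (fun r : ℝ => ∫ s in Ioi r, ((ω^2+s^2)^2)⁻¹) := by
  intro a b hab
  apply setIntegral_mono_set (Ik3 hω).integrableOn
  · apply ae_of_all
    intro s
    positivity
  · exact HasSubset.Subset.eventuallyLE (Ioi_subset_Ioi hab)

lemma K2nonneg {ω : ℝ} (r : ℝ) : 0 ≤ ∫ s in Ioi r, (ω^2+s^2)⁻¹ :=
  setIntegral_nonneg measurableSet_Ioi (fun s _ => by positivity)

lemma K3nonneg {ω : ℝ} (r : ℝ) : 0 ≤ ∫ s in Ioi r, ((ω^2+s^2)^2)⁻¹ :=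
  setIntegral_nonneg measurableSet_Ioi (fun s _ => by positivity)

-- tail bound : K2 r ≤ r⁻¹ for r ≥ 1 (or r > 0)
lemma K2tail {ω : ℝ} (hω : 0 < ω) {r : ℝ} (hr : 0 < r) :
    ∫ s in Ioi r, (ω^2+s^2)⁻¹ ≤ r⁻¹ := by
  have hrpow : ∫ s in Ioi r, s ^ (-2:ℝ) = r⁻¹ := by
    rw [integral_Ioi_rpow_of_lt (by norm_num) hr]
    rw [show (-2:ℝ)+1 = -1 by norm_num, Real.rpow_neg_one]
    field_simp
  rw [← hrpow]
  apply setIntegral_mono_on (Ik2 hω).integrableOn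
    ((integrableOn_Ioi_rpow_of_lt (by norm_num) hr)) measurableSet_Ioi
  intro s hs
  have hs0 : 0 < s := lt_trans hr hs
  rw [Real.rpow_neg hs0.le, show (2:ℝ) = ((2:ℕ):ℝ) by norm_num, Real.rpow_natCast]
  apply inv_anti₀ (by positivity)
  nlinarith

lemma K2bound {ω : ℝ} (hω : 0 < ω) (r : ℝ) (hr : 0 ≤ r) :
    ∫ s in Ioi r, (ω^2+s^2)⁻¹ ≤ (2*(∫ s in Ioi (0:ℝ), (ω^2+s^2)⁻¹)+2) * (1+r)⁻¹ := by
  set M := ∫ s in Ioi (0:ℝ), (ω^2+s^2)⁻¹ with hM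
  have hM0 : 0 ≤ M := K2nonneg 0
  rcases le_or_gt r 1 with h1 | h1
  · have hle : ∫ s in Ioi r, (ω^2+s^2)⁻¹ ≤ M := K2anti hω hr
    have : (1+r)⁻¹ ≥ 1/2 := by
      rw [ge_iff_le, le_inv_comm₀] <;> linarith
    nlinarith
  · have hr0 : 0 < r := by linarith
    calc ∫ s in Ioi r, (ω^2+s^2)⁻¹ ≤ r⁻¹ := K2tail hω hr0
      _ ≤ 2 * (1+r)⁻¹ := by
          rw [inv_eq_one_div, inv_eq_one_div, mul_one_div,
            div_le_div_iff₀ hr0 (by linarith)]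
          linarith
      _ ≤ (2*M+2) * (1+r)⁻¹ := by
          apply mul_le_mul_of_nonneg_right (by linarith) (by positivity)

lemma K3bound {ω : ℝ} (hω : 0 < ω) (r : ℝ) :
    ∫ s in Ioi r, ((ω^2+s^2)^2)⁻¹ ≤ (ω^2)⁻¹ * ∫ s in Ioi r, (ω^2+s^2)⁻¹ := by
  rw [← integral_const_mul]
  apply setIntegral_mono_on (Ik3 hω).integrableOn
    (((Ik2 hω).const_mul _).integrableOn) measurableSet_Ioi
  intro s _
  have h2 : (0:ℝ) < ω^2 + s^2 := by positivity
  rw [← mul_inv]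
  apply inv_anti₀ (by positivity)
  nlinarith [sq_nonneg ω, sq_nonneg s]


lemma icc_fin (ν : Measure ℝ)
    (hν : (∫⁻ r in Ici (0:ℝ), ENNReal.ofReal ((1 + r)⁻¹) ∂ν) < ⊤) (s : ℝ) :
    ν (Icc 0 s) ≠ ⊤ := by
  set t := max s 0 with ht
  have ht0 : 0 ≤ t := le_max_right _ _
  have hsub : Icc (0:ℝ) s ⊆ Icc 0 t := Icc_subset_Icc_right (le_max_left _ _)
  have hmain : ENNReal.ofReal ((1+t)⁻¹) * ν (Icc 0 t) ≤
      ∫⁻ r in Ici (0:ℝ), ENNReal.ofReal ((1 + r)⁻¹) ∂ν := by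
    calc ENNReal.ofReal ((1+t)⁻¹) * ν (Icc 0 t)
        = ∫⁻ _ in Icc (0:ℝ) t, ENNReal.ofReal ((1+t)⁻¹) ∂ν := by
          rw [setLIntegral_const, mul_comm]
      _ ≤ ∫⁻ r in Icc (0:ℝ) t, ENNReal.ofReal ((1 + r)⁻¹) ∂ν := by
          have hmeas : Measurable fun r : ℝ => ENNReal.ofReal ((1+r)⁻¹) :=
            ((measurable_const.add measurable_id).inv).ennreal_ofReal
          apply setLIntegral_mono hmeas
          intro r hr
          apply ENNReal.ofReal_le_ofReal
          apply inv_anti₀ (by linarith [hr.1]) (by linarith [hr.2])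
      _ ≤ ∫⁻ r in Ici (0:ℝ), ENNReal.ofReal ((1 + r)⁻¹) ∂ν :=
          lintegral_mono_set Icc_subset_Ici_self
  intro hcon
  have h1 : ν (Icc 0 t) = ⊤ := by
    rw [eq_top_iff, ← hcon]
    exact measure_mono hsub
  rw [h1, ENNReal.mul_top (ENNReal.ofReal_pos.mpr (by positivity)).ne'] at hmain
  exact absurd (lt_of_le_of_lt hmain hν) (lt_irrefl ⊤)

lemma sigfin (ν : Measure ℝ) (hfin : ∀ s : ℝ, ν (Icc 0 s) ≠ ⊤) :
    SigmaFinite (ν.restrict (Ici 0)) := by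
  refine ⟨⟨⟨fun n => Iio (n:ℝ), fun _ => mem_univ _, fun n => ?_, ?_⟩⟩⟩
  · rw [Measure.restrict_apply measurableSet_Iio]
    refine lt_of_le_of_lt (measure_mono ?_) (lt_top_iff_ne_top.mpr (hfin n))
    rintro x ⟨h1, h2⟩
    exact ⟨h2, le_of_lt h1⟩
  · apply eq_univ_of_forall
    intro x
    obtain ⟨n, hn⟩ := exists_nat_gt x
    exact mem_iUnion.2 ⟨n, hn⟩

lemma rep (ν : Measure ℝ) (hsf : SigmaFinite (ν.restrict (Ici 0)))
    (hfin : ∀ s : ℝ, ν (Icc 0 s) ≠ ⊤)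
    (hFm : Measurable (fun s : ℝ => (ν (Icc 0 s)).toReal))
    (k K : ℝ → ℝ) (hkm : Measurable k) (hKm : Measurable K)
    (hknn : ∀ s, 0 < s → 0 ≤ k s) (hKnn : ∀ r, 0 ≤ K r)
    (hKk : ∀ r, 0 ≤ r → ENNReal.ofReal (K r) = ∫⁻ s in Ioi r, ENNReal.ofReal (k s))
    (hfin2 : ∫⁻ r in Ici (0:ℝ), ENNReal.ofReal (K r) ∂ν ≠ ⊤) :
    IntegrableOn K (Ici 0) ν ∧
    IntegrableOn (fun s => k s * (ν (Icc 0 s)).toReal) (Ioi 0) volume ∧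
    ∫ r in Ici (0:ℝ), K r ∂ν = ∫ s in Ioi (0:ℝ), k s * (ν (Icc 0 s)).toReal := by
  haveI := hsf
  set g : ℝ → ℝ → ℝ≥0∞ := fun r s => (Ici r).indicator (fun s' => ENNReal.ofReal (k s')) s
    with hg
  -- inner identity for r ≥ 0
  have inner1 : ∀ r, 0 ≤ r →
      (∫⁻ s in Ioi (0:ℝ), g r s) = ENNReal.ofReal (K r) := by
    intro r hr
    rw [hg]
    simp only
    rw [lintegral_indicator measurableSet_Ici, Measure.restrict_restrict measurableSet_Ici,
      hKk r hr]
    apply setLIntegral_congr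
    have hsub : Ioi r ⊆ Ici r ∩ Ioi 0 := fun x hx => ⟨(show r ≤ x from le_of_lt hx), lt_of_le_of_lt hr hx⟩
    have hdiff : (Ici r ∩ Ioi 0) \ Ioi r ⊆ {r} := by
      rintro x ⟨⟨h1, _⟩, h3⟩
      simp only [mem_Ioi, not_lt] at h3
      simp [le_antisymm h3 h1]
    rw [MeasureTheory.ae_eq_set]
    constructor
    · exact measure_mono_null hdiff (measure_singleton r)
    · rw [diff_eq_empty.mpr hsub]
      simp
  -- measurability of the double integrand
  have hunc : Measurable (Function.uncurry g) := by
    have : Function.uncurry g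
        = Set.indicator {q : ℝ × ℝ | q.1 ≤ q.2} (fun p => ENNReal.ofReal (k p.2)) := by
      ext p
      simp [Function.uncurry, hg, Set.indicator_apply, Set.mem_Ici, Set.mem_setOf_eq]
    rw [this]
    exact Measurable.indicator ((hkm.comp measurable_snd).ennreal_ofReal)
      (measurableSet_le measurable_fst measurable_snd)
  -- swap
  have swap : ∫⁻ r in Ici (0:ℝ), ENNReal.ofReal (K r) ∂ν
      = ∫⁻ s in Ioi (0:ℝ), ENNReal.ofReal (k s) * ν (Icc 0 s) := by
    have e1 : ∫⁻ r in Ici (0:ℝ), ENNReal.ofReal (K r) ∂ν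
        = ∫⁻ r in Ici (0:ℝ), (∫⁻ s in Ioi (0:ℝ), g r s) ∂ν := by
      apply setLIntegral_congr_fun measurableSet_Ici
      intro r hr
      exact (inner1 r hr).symm
    rw [e1, lintegral_lintegral_swap hunc.aemeasurable]
    apply lintegral_congr
    intro s
    have e2 : ∀ r : ℝ, g r s = (Iic s).indicator (fun _ => ENNReal.ofReal (k s)) r := by
      intro r
      simp [hg, Set.indicator_apply, Set.mem_Ici, Set.mem_Iic]
    rw [lintegral_congr e2, lintegral_indicator measurableSet_Iic, setLIntegral_const,
      Measure.restrict_apply measurableSet_Iic,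
      show Iic s ∩ Ici 0 = Icc 0 s from by rw [inter_comm, Ici_inter_Iic]]
  -- identify the RHS lintegral with ofReal of the real integrand
  have rhs_eq : ∫⁻ s in Ioi (0:ℝ), ENNReal.ofReal (k s * (ν (Icc 0 s)).toReal)
      = ∫⁻ s in Ioi (0:ℝ), ENNReal.ofReal (k s) * ν (Icc 0 s) := by
    apply setLIntegral_congr_fun measurableSet_Ioi
    intro s hs
    beta_reduce
    rw [ENNReal.ofReal_mul (hknn s hs), ENNReal.ofReal_toReal (hfin s)]
  have hKint : IntegrableOn K (Ici 0) ν := by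
    refine ⟨hKm.aestronglyMeasurable.restrict, ?_⟩
    rw [hasFiniteIntegral_iff_ofReal (ae_of_all _ hKnn)]
    exact lt_top_iff_ne_top.mpr hfin2
  have hkFint : IntegrableOn (fun s => k s * (ν (Icc 0 s)).toReal) (Ioi 0) volume := by
    refine ⟨(hkm.mul hFm).aestronglyMeasurable.restrict, ?_⟩
    have hnn : 0 ≤ᵐ[volume.restrict (Ioi (0:ℝ))] fun s => k s * (ν (Icc 0 s)).toReal := by
      filter_upwards [ae_restrict_mem measurableSet_Ioi] with s hs
      exact mul_nonneg (hknn s hs) ENNReal.toReal_nonneg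
    rw [hasFiniteIntegral_iff_ofReal hnn, rhs_eq, ← swap]
    exact lt_top_iff_ne_top.mpr hfin2
  refine ⟨hKint, hkFint, ?_⟩
  rw [integral_eq_lintegral_of_nonneg_ae (ae_of_all _ hKnn) hKm.aestronglyMeasurable.restrict,
    integral_eq_lintegral_of_nonneg_ae (f := fun s => k s * (ν (Icc 0 s)).toReal) ?hnn (hkm.mul hFm).aestronglyMeasurable.restrict,
    rhs_eq, ← swap]
  case hnn =>
    filter_upwards [ae_restrict_mem measurableSet_Ioi] with s hs
    exact mul_nonneg (hknn s hs) ENNReal.toReal_nonneg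

lemma K1bound {ω : ℝ} (hω : 0 < ω) (r : ℝ) (hr : 0 ≤ r) :
    (ω^2+r^2)⁻¹ ≤ (2*(ω^2)⁻¹+2) * (1+r)⁻¹ := by
  have hω2 : (0:ℝ) < ω^2 := by positivity
  rcases le_or_gt r 1 with h1 | h1
  · have ha : (ω^2+r^2)⁻¹ ≤ (ω^2)⁻¹ := inv_anti₀ hω2 (by nlinarith)
    have hhalf : (2:ℝ)⁻¹ ≤ (1+r)⁻¹ := inv_anti₀ (by linarith) (by linarith)
    have hb : (2*(ω^2)⁻¹+2) * 2⁻¹ ≤ (2*(ω^2)⁻¹+2) * (1+r)⁻¹ :=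
      mul_le_mul_of_nonneg_left hhalf (by positivity)
    have he : (2*(ω^2)⁻¹+2) * 2⁻¹ = (ω^2)⁻¹ + 1 := by ring
    rw [he] at hb
    linarith
  · have ha : (ω^2+r^2)⁻¹ ≤ (r^2)⁻¹ := inv_anti₀ (by positivity) (by nlinarith)
    have hb : (r^2)⁻¹ ≤ 2 * (1+r)⁻¹ := by
      rw [inv_eq_one_div, inv_eq_one_div, mul_one_div, div_le_div_iff₀ (by positivity) (by linarith)]
      nlinarith
    have hc : 2 * (1+r)⁻¹ ≤ (2*(ω^2)⁻¹+2) * (1+r)⁻¹ :=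
      mul_le_mul_of_nonneg_right (by nlinarith [inv_nonneg.mpr hω2.le]) (by positivity)
    linarith
/-- Let `ν` be a positive Radon measure on `[0,∞)` with
`∫ (1+r)⁻¹ ν(dr) < ∞`, and define the attenuation `A(ω) = ω² ∫ (ω²+r²)⁻¹ ν(dr)` and
dispersion `D(ω) = ω ∫ r(ω²+r²)⁻¹ ν(dr)`.  If `ν([0,r]) ∼ r^{1−α} l(r)` as `r → ∞` with
`0 < α < 1` and `l` slowly varying at infinity, then
`A(ω) ∼ [(1−α)π/(2 cos(απ/2))] ω^{1−α} l(ω)` and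
`D(ω) ∼ [(1−α)π/(2 sin(απ/2))] ω^{1−α} l(ω)` as `ω → ∞`. -/
theorem stmt14 (ν : Measure ℝ)
    (hν : (∫⁻ r in Ici (0:ℝ), ENNReal.ofReal ((1 + r)⁻¹) ∂ν) < ⊤)
    (A D : ℝ → ℝ)
    (hA : ∀ ω : ℝ, 0 < ω → A ω = ω ^ 2 * ∫ r in Ici (0:ℝ), (ω ^ 2 + r ^ 2)⁻¹ ∂ν)
    (hD : ∀ ω : ℝ, 0 < ω → D ω = ω * ∫ r in Ici (0:ℝ), r / (ω ^ 2 + r ^ 2) ∂ν)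
    (α : ℝ) (hα0 : 0 < α) (hα1 : α < 1)
    (l : ℝ → ℝ) (hlpos : ∀ x : ℝ, 0 < x → 0 < l x)
    (hslow : ∀ c : ℝ, 0 < c → Tendsto (fun x : ℝ => l (c * x) / l x) atTop (nhds 1))
    (hasymp : Tendsto (fun r : ℝ => (ν (Icc (0:ℝ) r)).toReal / (r ^ (1 - α) * l r))
      atTop (nhds 1)) :
    Tendsto (fun ω : ℝ =>
        A ω / ((1 - α) * π / (2 * Real.cos (α * π / 2)) * ω ^ (1 - α) * l ω))
      atTop (nhds 1) ∧
    Tendsto (fun ω : ℝ =>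
        D ω / ((1 - α) * π / (2 * Real.sin (α * π / 2)) * ω ^ (1 - α) * l ω))
      atTop (nhds 1) := by
  have hfin : ∀ s : ℝ, ν (Icc 0 s) ≠ ⊤ := icc_fin ν hν
  have hsf := sigfin ν hfin
  set F : ℝ → ℝ := fun s => (ν (Icc 0 s)).toReal with hFdef
  have hFmono : Monotone F := fun a b hab =>
    ENNReal.toReal_mono (hfin b) (measure_mono (Icc_subset_Icc_right hab))
  have hFmeas : Measurable F := hFmono.measurable
  have hFnn : ∀ x, 0 ≤ F x := fun x => ENNReal.toReal_nonneg
  have lint_fin : ∀ (K : ℝ → ℝ) (C : ℝ), 0 ≤ C → (∀ r, 0 ≤ r → K r ≤ C * (1+r)⁻¹) →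
      ∫⁻ r in Ici (0:ℝ), ENNReal.ofReal (K r) ∂ν ≠ ⊤ := by
    intro K C hC hb
    have hmeas : Measurable fun r : ℝ => ENNReal.ofReal ((1+r)⁻¹) :=
      ((measurable_const.add measurable_id).inv).ennreal_ofReal
    have hle : ∫⁻ r in Ici (0:ℝ), ENNReal.ofReal (K r) ∂ν
        ≤ ∫⁻ r in Ici (0:ℝ), ENNReal.ofReal C * ENNReal.ofReal ((1+r)⁻¹) ∂ν := by
      apply setLIntegral_mono (measurable_const.mul hmeas)
      intro r hr
      show ENNReal.ofReal (K r) ≤ ENNReal.ofReal C * ENNReal.ofReal ((1+r)⁻¹)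
      rw [← ENNReal.ofReal_mul hC]
      exact ENNReal.ofReal_le_ofReal (hb r hr)
    rw [lintegral_const_mul _ hmeas] at hle
    exact (lt_of_le_of_lt hle (ENNReal.mul_lt_top ENNReal.ofReal_lt_top hν)).ne
  constructor
  -- ATTENUATION
  · set q : ℝ → ℝ := fun u => 2*u/(1+u^2)^2 with hqdef
    have hqmeas : Measurable q := by
      apply Measurable.div
      · exact measurable_const.mul measurable_id
      · exact (measurable_const.add (measurable_id.pow_const 2)).pow_const 2
    have hqb : ∀ u, 0 < u → |q u| ≤ (1+u^2)⁻¹ := by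
      intro u hu
      rw [hqdef]
      simp only
      rw [abs_of_nonneg (by positivity), div_le_iff₀ (by positivity)]
      have e : (1+u^2)⁻¹ * (1+u^2)^2 = 1+u^2 := by field_simp
      rw [e]
      nlinarith [sq_nonneg (u-1)]
    have hconv := main_conv F hFmeas hFmono hFnn hα0 hα1 l hlpos hslow hasymp q hqmeas hqb
    have hrep : ∀ᶠ ω in atTop, A ω = ∫ u in Ioi (0:ℝ), q u * F (ω*u) := by
      filter_upwards [eventually_gt_atTop 0] with ω hω
      have hofk1 : ∀ r, 0 ≤ r → ENNReal.ofReal ((ω^2+r^2)⁻¹)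
          = ∫⁻ s in Ioi r, ENNReal.ofReal (2*s/(ω^2+s^2)^2) := by
        intro r hr
        rw [← ftcK1 hω r]
        apply ofReal_integral_eq_lintegral_ofReal (Ik1 hω).integrableOn
        filter_upwards [ae_restrict_mem measurableSet_Ioi] with s hs
        have hs0 : 0 < s := lt_of_le_of_lt hr hs
        positivity
      have hrep1 := rep ν hsf hfin hFmeas (fun s => 2*s/(ω^2+s^2)^2)
        (fun r => (ω^2+r^2)⁻¹)
        ((measurable_const.mul measurable_id).div
          ((measurable_const.add (measurable_id.pow_const 2)).pow_const 2))
        ((measurable_const.add (measurable_id.pow_const 2)).inv)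
        (fun s hs => by positivity) (fun r => by positivity)
        hofk1
        (lint_fin _ (2*(ω^2)⁻¹+2) (by positivity) (K1bound hω))
      have heq1 : ∫ r in Ici (0:ℝ), (ω^2+r^2)⁻¹ ∂ν
          = ∫ s in Ioi (0:ℝ), 2*s/(ω^2+s^2)^2 * F s := hrep1.2.2
      have hscale := integral_comp_mul_left_Ioi
        (fun s => 2*s/(ω^2+s^2)^2 * F s) 0 hω
      rw [mul_zero] at hscale
      have hpt : ∀ u ∈ Ioi (0:ℝ),
          (fun x => 2*(ω*x)/(ω^2+(ω*x)^2)^2 * F (ω*x)) u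
            = (ω^3)⁻¹ * (q u * F (ω*u)) := by
        intro u hu
        simp only [hqdef]
        have hu0 : (0:ℝ) < u := hu
        have hd : (0:ℝ) < 1+u^2 := by positivity
        field_simp
      rw [setIntegral_congr_fun measurableSet_Ioi hpt, integral_const_mul,
        smul_eq_mul] at hscale
      rw [hA ω hω, show (fun r => (ω^2+r^2)⁻¹) = (fun r : ℝ => (ω^2+r^2)⁻¹) from rfl]
      rw [heq1]
      set I1 := ∫ s in Ioi (0:ℝ), 2*s/(ω^2+s^2)^2 * F s with hI1
      set I2 := ∫ u in Ioi (0:ℝ), q u * F (ω*u) with hI2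
      calc ω^2 * I1 = ω^3 * (ω⁻¹ * I1) := by field_simp
        _ = ω^3 * ((ω^3)⁻¹ * I2) := by rw [← hscale]
        _ = I2 := by field_simp
    have hcA : ∫ u in Ioi (0:ℝ), q u * u^(1-α) = (1-α)*π/(2*Real.cos (α*π/2)) :=
      IA_val hα0 hα1
    have hcos : 0 < Real.cos (α*π/2) := by
      apply Real.cos_pos_of_mem_Ioo
      constructor
      · nlinarith [pi_pos]
      · nlinarith [pi_pos]
    have hcApos : 0 < (1-α)*π/(2*Real.cos (α*π/2)) := by
      apply div_pos (by nlinarith [pi_pos]) (by linarith)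
    have htend := hconv.div_const ((1-α)*π/(2*Real.cos (α*π/2)))
    rw [hcA, div_self hcApos.ne'] at htend
    apply Tendsto.congr' _ htend
    filter_upwards [hrep, eventually_gt_atTop 0] with ω hωrep hω
    show (∫ u in Ioi (0:ℝ), q u * F (ω*u) / (ω^(1-α) * l ω))
        / ((1-α)*π/(2*Real.cos (α*π/2)))
      = A ω / ((1-α)*π/(2*Real.cos (α*π/2)) * ω^(1-α) * l ω)
    rw [hωrep, integral_div, div_div]
    congr 1
    ring
  -- DISPERSION
  · set q : ℝ → ℝ := fun u => (u^2-1)/(1+u^2)^2 with hqdef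
    have hqmeas : Measurable q := by
      apply Measurable.div
      · exact (measurable_id.pow_const 2).sub measurable_const
      · exact (measurable_const.add (measurable_id.pow_const 2)).pow_const 2
    have hqb : ∀ u, 0 < u → |q u| ≤ (1+u^2)⁻¹ := by
      intro u hu
      rw [hqdef]
      simp only
      rw [abs_div, abs_of_nonneg (show (0:ℝ) ≤ (1+u^2)^2 by positivity),
        div_le_iff₀ (by positivity)]
      have e : (1+u^2)⁻¹ * (1+u^2)^2 = 1+u^2 := by field_simp
      rw [e]
      rw [abs_le]
      constructor <;> nlinarith
    have hconv := main_conv F hFmeas hFmono hFnn hα0 hα1 l hlpos hslow hasymp q hqmeas hqb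
    have hrep : ∀ᶠ ω in atTop, D ω = ∫ u in Ioi (0:ℝ), q u * F (ω*u) := by
      filter_upwards [eventually_gt_atTop 0] with ω hω
      set M := ∫ s in Ioi (0:ℝ), (ω^2+s^2)⁻¹ with hM
      have hM0 : 0 ≤ M := K2nonneg 0
      have hofk2 : ∀ r, 0 ≤ r → ENNReal.ofReal (∫ s in Ioi r, (ω^2+s^2)⁻¹)
          = ∫⁻ s in Ioi r, ENNReal.ofReal ((ω^2+s^2)⁻¹) := by
        intro r _
        exact ofReal_integral_eq_lintegral_ofReal (Ik2 hω).integrableOn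
          (ae_of_all _ (fun s => by positivity))
      have hofk3 : ∀ r, 0 ≤ r → ENNReal.ofReal (∫ s in Ioi r, ((ω^2+s^2)^2)⁻¹)
          = ∫⁻ s in Ioi r, ENNReal.ofReal (((ω^2+s^2)^2)⁻¹) := by
        intro r _
        exact ofReal_integral_eq_lintegral_ofReal (Ik3 hω).integrableOn
          (ae_of_all _ (fun s => by positivity))
      have hrep2 := rep ν hsf hfin hFmeas (fun s => (ω^2+s^2)⁻¹)
        (fun r => ∫ s in Ioi r, (ω^2+s^2)⁻¹)
        ((measurable_const.add (measurable_id.pow_const 2)).inv)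
        ((K2anti hω).measurable)
        (fun s _ => by positivity) (fun r => K2nonneg r)
        hofk2
        (lint_fin _ (2*M+2) (by linarith) (fun r hr => K2bound hω r hr))
      have hrep3 := rep ν hsf hfin hFmeas (fun s => ((ω^2+s^2)^2)⁻¹)
        (fun r => ∫ s in Ioi r, ((ω^2+s^2)^2)⁻¹)
        (((measurable_const.add (measurable_id.pow_const 2)).pow_const 2).inv)
        ((K3anti hω).measurable)
        (fun s _ => by positivity) (fun r => K3nonneg r)
        hofk3
        (lint_fin _ ((ω^2)⁻¹*(2*M+2)) (by positivity) (fun r hr => by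
          calc (∫ s in Ioi r, ((ω^2+s^2)^2)⁻¹) ≤ (ω^2)⁻¹ * ∫ s in Ioi r, (ω^2+s^2)⁻¹ :=
                K3bound hω r
            _ ≤ (ω^2)⁻¹ * ((2*M+2) * (1+r)⁻¹) :=
                mul_le_mul_of_nonneg_left (K2bound hω r hr) (by positivity)
            _ = (ω^2)⁻¹*(2*M+2) * (1+r)⁻¹ := by ring))
      have hid : ∀ r ∈ Ici (0:ℝ), r/(ω^2+r^2)
          = (∫ s in Ioi r, (ω^2+s^2)⁻¹) - 2*ω^2*∫ s in Ioi r, ((ω^2+s^2)^2)⁻¹ := by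
        intro r _
        rw [← ftcG hω r,
          integral_sub (Ik2 hω).integrableOn ((Ik3 hω).const_mul (2*ω^2)).integrableOn,
          integral_const_mul]
      have hK2int : IntegrableOn (fun r => ∫ s in Ioi r, (ω^2+s^2)⁻¹) (Ici 0) ν := hrep2.1
      have hK3int : IntegrableOn (fun r => ∫ s in Ioi r, ((ω^2+s^2)^2)⁻¹) (Ici 0) ν := hrep3.1
      have hk2F : IntegrableOn (fun s => (ω^2+s^2)⁻¹ * F s) (Ioi 0) volume := hrep2.2.1
      have hk3F : IntegrableOn (fun s => ((ω^2+s^2)^2)⁻¹ * F s) (Ioi 0) volume := hrep3.2.1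
      have heq2 : ∫ r in Ici (0:ℝ), (∫ s in Ioi r, (ω^2+s^2)⁻¹) ∂ν
          = ∫ s in Ioi (0:ℝ), (ω^2+s^2)⁻¹ * F s := hrep2.2.2
      have heq3 : ∫ r in Ici (0:ℝ), (∫ s in Ioi r, ((ω^2+s^2)^2)⁻¹) ∂ν
          = ∫ s in Ioi (0:ℝ), ((ω^2+s^2)^2)⁻¹ * F s := hrep3.2.2
      have e0 : ∫ r in Ici (0:ℝ), r/(ω^2+r^2) ∂ν
          = (∫ s in Ioi (0:ℝ), (ω^2+s^2)⁻¹ * F s)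
            - 2*ω^2 * ∫ s in Ioi (0:ℝ), ((ω^2+s^2)^2)⁻¹ * F s := by
        rw [setIntegral_congr_fun measurableSet_Ici hid,
          integral_sub hK2int (hK3int.const_mul (2*ω^2)), integral_const_mul,
          heq2, heq3]
      have e2 : ∫ s in Ioi (0:ℝ), ((ω^2+s^2)⁻¹ * F s - 2*ω^2*(((ω^2+s^2)^2)⁻¹ * F s))
          = (∫ s in Ioi (0:ℝ), (ω^2+s^2)⁻¹ * F s)
            - 2*ω^2 * ∫ s in Ioi (0:ℝ), ((ω^2+s^2)^2)⁻¹ * F s := by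
        rw [integral_sub hk2F (hk3F.const_mul (2*ω^2)), integral_const_mul]
      have hscale := integral_comp_mul_left_Ioi
        (fun s => ((ω^2+s^2)⁻¹ * F s - 2*ω^2*(((ω^2+s^2)^2)⁻¹ * F s))) 0 hω
      rw [mul_zero] at hscale
      have hpt : ∀ u ∈ Ioi (0:ℝ),
          (fun x => ((ω^2+(ω*x)^2)⁻¹ * F (ω*x) - 2*ω^2*(((ω^2+(ω*x)^2)^2)⁻¹ * F (ω*x)))) u
            = (ω^2)⁻¹ * (q u * F (ω*u)) := by
        intro u hu
        simp only [hqdef]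
        have hu0 : (0:ℝ) < u := hu
        have hd : (0:ℝ) < 1+u^2 := by positivity
        field_simp
        ring
      rw [setIntegral_congr_fun measurableSet_Ioi hpt, integral_const_mul,
        smul_eq_mul] at hscale
      rw [hD ω hω, e0, ← e2]
      set I1 := ∫ s in Ioi (0:ℝ), ((ω^2+s^2)⁻¹ * F s - 2*ω^2*(((ω^2+s^2)^2)⁻¹ * F s))
        with hI1
      set I2 := ∫ u in Ioi (0:ℝ), q u * F (ω*u) with hI2
      calc ω * I1 = ω^2 * (ω⁻¹ * I1) := by field_simp
        _ = ω^2 * ((ω^2)⁻¹ * I2) := by rw [← hscale]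
        _ = I2 := by field_simp
    have hcD : ∫ u in Ioi (0:ℝ), q u * u^(1-α) = (1-α)*π/(2*Real.sin (α*π/2)) :=
      ID_val hα0 hα1
    have hsin : 0 < Real.sin (α*π/2) := by
      apply Real.sin_pos_of_pos_of_lt_pi
      · nlinarith [pi_pos]
      · nlinarith [pi_pos]
    have hcDpos : 0 < (1-α)*π/(2*Real.sin (α*π/2)) := by
      apply div_pos (by nlinarith [pi_pos]) (by linarith)
    have htend := hconv.div_const ((1-α)*π/(2*Real.sin (α*π/2)))
    rw [hcD, div_self hcDpos.ne'] at htend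
    apply Tendsto.congr' _ htend
    filter_upwards [hrep, eventually_gt_atTop 0] with ω hωrep hω
    show (∫ u in Ioi (0:ℝ), q u * F (ω*u) / (ω^(1-α) * l ω))
        / ((1-α)*π/(2*Real.sin (α*π/2)))
      = D ω / ((1-α)*π/(2*Real.sin (α*π/2)) * ω^(1-α) * l ω)
    rw [hωrep, integral_div, div_div]
    congr 1
    ring
end

section
/- Let ρ > 0 and let μ be a nonzero positive Radon measure on [0,∞) with ∫_{[0,∞)} (1+r)^{−1} μ(dr) < ∞ and μ({0}) > 0 (i.e., the equilibrium modulus G∞ = μ({0}) is positive). Define Q(p) = p ∫_{[0,∞)} (p+r)^{−1} μ(dr) and κ(p) = ρ^{1/2} p / Q(p)^{1/2} (principal square root) for Re p ≥ 0, p ≠ 0. Then the attenuation function A(ω) = Re κ(−iω) satisfies lim_{ω→0+} A(ω)/ω = 0, and the reciprocal phase speed 1/c(ω) = −Im κ(−iω)/ω has the finite limit lim_{ω→0+} 1/c(ω) = (ρ/μ({0}))^{1/2} = 1/c₀. -/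
open MeasureTheory Set Filter

/-- Let `ρ > 0` and let `μ` be a nonzero positive Radon measure on `[0,∞)`
with `∫ (1+r)⁻¹ μ(dr) < ∞` and `μ({0}) > 0` (positive equilibrium modulus `G∞ = μ({0})`).
With `Q(p) = p ∫ (p+r)⁻¹ μ(dr)` and `κ(p) = √ρ p / Q(p)^{1/2}` (principal branch), the
attenuation `A(ω) = Re κ(−iω)` satisfies `A(ω)/ω → 0` as `ω → 0+`, and the reciprocal phase
speed `1/c(ω) = −Im κ(−iω)/ω` tends to `(ρ/μ({0}))^{1/2} = 1/c₀` as `ω → 0+`. -/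
theorem stmt15 (ρ : ℝ) (hρ : 0 < ρ) (μ : Measure ℝ)
    (hμ : (∫⁻ r in Ici (0:ℝ), ENNReal.ofReal ((1 + r)⁻¹) ∂μ) < ⊤)
    (h0 : μ {(0:ℝ)} ≠ 0)
    (Q κ : ℂ → ℂ)
    (hQ : ∀ p : ℂ, Q p = p * ∫ r in Ici (0:ℝ), (p + (r : ℂ))⁻¹ ∂μ)
    (hκ : ∀ p : ℂ, κ p = (Real.sqrt ρ : ℂ) * p / (Q p) ^ ((1:ℂ) / 2)) :
    Tendsto (fun ω : ℝ => (κ (-((ω : ℂ) * Complex.I))).re / ω)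
        (nhdsWithin 0 (Ioi 0)) (nhds 0) ∧
      Tendsto (fun ω : ℝ => -(κ (-((ω : ℂ) * Complex.I))).im / ω)
        (nhdsWithin 0 (Ioi 0)) (nhds (Real.sqrt (ρ / (μ {(0:ℝ)}).toReal))) := by
  set ν : Measure ℝ := μ.restrict (Ici 0) with hν
  -- μ {0} is finite
  have hfin : μ {(0:ℝ)} < ⊤ := by
    have h1 : ∫⁻ r in {(0:ℝ)}, ENNReal.ofReal ((1 + r)⁻¹) ∂μ ≤
        ∫⁻ r in Ici (0:ℝ), ENNReal.ofReal ((1 + r)⁻¹) ∂μ :=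
      lintegral_mono_set (by intro x hx; rw [mem_singleton_iff] at hx; simp [hx])
    have h2 : ∫⁻ r in {(0:ℝ)}, ENNReal.ofReal ((1 + r)⁻¹) ∂μ = μ {(0:ℝ)} := by
      rw [lintegral_singleton]
      norm_num
    rw [h2] at h1
    exact lt_of_le_of_lt h1 hμ
  set G : ℝ := (μ {(0:ℝ)}).toReal with hG
  have hGpos : 0 < G := ENNReal.toReal_pos h0 hfin.ne
  -- integrable bound
  have hmeas : Measurable fun r : ℝ => (1 + r)⁻¹ := (measurable_const.add measurable_id).inv
  have hint : Integrable (fun r : ℝ => (1 + r)⁻¹) ν := by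
    refine ⟨hmeas.aestronglyMeasurable, ?_⟩
    rw [hasFiniteIntegral_iff_ofReal ?_]
    · exact hμ
    · refine (ae_restrict_iff' measurableSet_Ici).2 (ae_of_all _ fun r hr => ?_)
      have : (0:ℝ) < 1 + r := by simp at hr; linarith
      positivity
  have hbound : Integrable (fun r : ℝ => 2 * (1 + r)⁻¹) ν := hint.const_mul 2
  -- F functions
  set F : ℝ → ℝ → ℂ := fun ω r => (-((ω : ℂ) * Complex.I)) * ((-((ω : ℂ) * Complex.I)) + (r:ℂ))⁻¹
    with hF
  have hQeq : ∀ ω : ℝ, Q (-((ω:ℂ) * Complex.I)) = ∫ r, F ω r ∂ν := by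
    intro ω
    rw [hQ, ← integral_const_mul]
  -- integral of limit
  have hIlim : (∫ r, Set.indicator {(0:ℝ)} (fun _ => (1:ℂ)) r ∂ν) = (G : ℂ) := by
    rw [integral_indicator (measurableSet_singleton 0)]
    rw [hν, Measure.restrict_restrict (measurableSet_singleton 0)]
    have : ({(0:ℝ)} ∩ Ici 0) = {(0:ℝ)} := by
      ext x; simp (config := {contextual := true}) [le_refl]
    rw [this, setIntegral_const]
    simp [hG]
    rfl
  -- DCT
  have hQtends : Tendsto (fun ω : ℝ => Q (-((ω:ℂ) * Complex.I))) (nhdsWithin 0 (Ioi 0))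
      (nhds (G : ℂ)) := by
    have hdct := tendsto_integral_filter_of_dominated_convergence
      (μ := ν) (F := F) (f := Set.indicator {(0:ℝ)} (fun _ => (1:ℂ)))
      (l := nhdsWithin 0 (Ioi 0)) (fun r => 2 * (1 + r)⁻¹)
      ?_ ?_ hbound ?_
    · rw [← hIlim]
      refine Tendsto.congr (fun ω => (hQeq ω).symm) hdct
    · refine Eventually.of_forall fun ω => ?_
      exact (Measurable.mul measurable_const
        ((measurable_const.add Complex.measurable_ofReal).inv)).aestronglyMeasurable
    · -- bound, eventually for ω ∈ Ioo 0 1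
      have hev : ∀ᶠ ω : ℝ in nhdsWithin 0 (Ioi 0), ω ∈ Ioo (0:ℝ) 1 :=
        Ioo_mem_nhdsGT_of_mem (by norm_num : (0:ℝ) ∈ Ico (0:ℝ) 1)
      filter_upwards [hev] with ω hω
      refine (ae_restrict_iff' measurableSet_Ici).2 (ae_of_all _ fun r hr => ?_)
      have hr0 : (0:ℝ) ≤ r := hr
      set z : ℂ := (-((ω : ℂ) * Complex.I)) + (r:ℂ) with hz
      have hzre : z.re = r := by simp [hz]
      have hzim : z.im = -ω := by simp [hz]
      have hzpos : 0 < ‖z‖ := by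
        rw [norm_pos_iff]
        intro h
        rw [h] at hzim
        simp at hzim
        linarith [hω.1]
      have h1 : ω ≤ ‖z‖ := by
        have := Complex.abs_im_le_norm z
        rw [hzim] at this
        rw [abs_neg, abs_of_pos hω.1] at this
        exact this
      have h2 : r ≤ ‖z‖ := by
        have := Complex.abs_re_le_norm z
        rw [hzre, abs_of_nonneg hr0] at this
        exact this
      have hnum : ‖(-((ω:ℂ) * Complex.I))‖ = ω := by
        rw [norm_neg, norm_mul, Complex.norm_I, Complex.norm_of_nonneg hω.1.le,
          mul_one]
      have hnorm : ‖F ω r‖ = ω * ‖z‖⁻¹ := by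
        rw [hF]
        simp only [norm_mul, norm_inv, ← hz, hnum]
      rw [hnorm, ← div_eq_mul_inv, ← div_eq_mul_inv,
        div_le_div_iff₀ hzpos (by linarith : (0:ℝ) < 1 + r)]
      nlinarith [hω.1.le, hω.2.le, hr0, h1, h2]
    · -- pointwise limit
      refine (ae_restrict_iff' measurableSet_Ici).2 (ae_of_all _ fun r hr => ?_)
      rcases eq_or_lt_of_le (mem_Ici.mp hr : (0:ℝ) ≤ r) with h | h
      · -- r = 0
        have hr0 : r = 0 := h.symm
        subst hr0
        have : Set.indicator {(0:ℝ)} (fun _ => (1:ℂ)) 0 = 1 := by simp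
        rw [this]
        refine Tendsto.congr' ?_ tendsto_const_nhds
        filter_upwards [self_mem_nhdsWithin] with ω (hω : ω ∈ Ioi (0:ℝ))
        have hne : (-((ω : ℂ) * Complex.I)) ≠ 0 := by
          simp only [ne_eq, neg_eq_zero, mul_eq_zero, Complex.I_ne_zero, or_false,
            Complex.ofReal_eq_zero]
          exact ne_of_gt hω
        rw [hF]
        simp only [Complex.ofReal_zero, add_zero]
        exact (mul_inv_cancel₀ hne).symm
      · -- r > 0
        have : Set.indicator {(0:ℝ)} (fun _ => (1:ℂ)) r = 0 := by
          simp [ne_of_gt h]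
        rw [this, hF]
        have hrc : ((r:ℂ)) ≠ 0 := by
          simp [Complex.ofReal_eq_zero, ne_of_gt h]
        have h1 : Tendsto (fun ω : ℝ => -((ω : ℂ) * Complex.I)) (nhdsWithin 0 (Ioi 0))
            (nhds 0) := by
          have hc : Continuous fun ω : ℝ => -((ω : ℂ) * Complex.I) := by continuity
          simpa using (hc.tendsto 0).mono_left (nhdsWithin_le_nhds (s := Ioi 0))
        have hcont : ContinuousAt (fun z : ℂ => z * (z + (r:ℂ))⁻¹) 0 := by
          refine continuousAt_id.mul ?_
          exact (continuousAt_id.add continuousAt_const).inv₀ (by simpa using hrc)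
        have h3 := hcont.tendsto.comp h1
        simp only [Function.comp_def] at h3
        rw [show (0:ℂ) * ((0:ℂ) + (r:ℂ))⁻¹ = 0 from by simp] at h3
        exact h3.congr (fun ω => by simp only [Function.comp_apply])
  -- sqrt step
  have hGslit : ((G : ℂ)) ∈ Complex.slitPlane := by
    rw [Complex.mem_slitPlane_iff]
    left; simpa using hGpos
  have hsq : Tendsto (fun ω : ℝ => (Q (-((ω:ℂ) * Complex.I))) ^ ((1:ℂ)/2))
      (nhdsWithin 0 (Ioi 0)) (nhds ((Real.sqrt G : ℝ) : ℂ)) := by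
    have hc : ContinuousAt (fun z : ℂ => z ^ ((1:ℂ)/2)) (G : ℂ) :=
      continuousAt_cpow_const hGslit
    have := hc.tendsto.comp hQtends
    have heq : ((G:ℂ)) ^ ((1:ℂ)/2) = ((Real.sqrt G : ℝ) : ℂ) := by
      rw [Real.sqrt_eq_rpow, Complex.ofReal_cpow hGpos.le]
      norm_num
    rw [heq] at this
    exact this
  have hsqne : ((Real.sqrt G : ℝ) : ℂ) ≠ 0 := by
    simp [Real.sqrt_eq_zero', not_le, hGpos]
  -- limit of h ω
  set L : ℂ := (Real.sqrt ρ : ℂ) * (-Complex.I) / ((Real.sqrt G : ℝ) : ℂ) with hL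
  have htends : Tendsto (fun ω : ℝ =>
      (Real.sqrt ρ : ℂ) * (-Complex.I) / (Q (-((ω:ℂ) * Complex.I))) ^ ((1:ℂ)/2))
      (nhdsWithin 0 (Ioi 0)) (nhds L) :=
    tendsto_const_nhds.div hsq hsqne
  -- eventual equality
  have hev : ∀ᶠ ω : ℝ in nhdsWithin 0 (Ioi 0),
      (κ (-((ω : ℂ) * Complex.I))).re / ω =
        ((Real.sqrt ρ : ℂ) * (-Complex.I) / (Q (-((ω:ℂ) * Complex.I))) ^ ((1:ℂ)/2)).re ∧
      (κ (-((ω : ℂ) * Complex.I))).im / ω =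
        ((Real.sqrt ρ : ℂ) * (-Complex.I) / (Q (-((ω:ℂ) * Complex.I))) ^ ((1:ℂ)/2)).im := by
    filter_upwards [self_mem_nhdsWithin] with ω (hω : ω ∈ Ioi (0:ℝ))
    have hωne : (ω : ℝ) ≠ 0 := ne_of_gt hω
    have hkey : κ (-((ω : ℂ) * Complex.I)) =
        (ω : ℂ) * ((Real.sqrt ρ : ℂ) * (-Complex.I) /
          (Q (-((ω:ℂ) * Complex.I))) ^ ((1:ℂ)/2)) := by
      rw [hκ]; ring
    constructor
    · rw [hkey, Complex.re_ofReal_mul]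
      exact mul_div_cancel_left₀ _ hωne
    · rw [hkey, Complex.im_ofReal_mul]
      exact mul_div_cancel_left₀ _ hωne
  -- compute L
  have hLre : L.re = 0 := by
    rw [hL, Complex.div_ofReal_re]
    simp
  have hLim : L.im = -(Real.sqrt ρ / Real.sqrt G) := by
    rw [hL, Complex.div_ofReal_im]
    simp [neg_div]
  have hre : Tendsto (fun ω : ℝ => (κ (-((ω : ℂ) * Complex.I))).re / ω)
      (nhdsWithin 0 (Ioi 0)) (nhds L.re) := by
    refine Tendsto.congr' ?_ ((Complex.continuous_re.tendsto L).comp htends)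
    filter_upwards [hev] with ω hω
    exact hω.1.symm
  have him : Tendsto (fun ω : ℝ => (κ (-((ω : ℂ) * Complex.I))).im / ω)
      (nhdsWithin 0 (Ioi 0)) (nhds L.im) := by
    refine Tendsto.congr' ?_ ((Complex.continuous_im.tendsto L).comp htends)
    filter_upwards [hev] with ω hω
    exact hω.2.symm
  constructor
  · rwa [hLre] at hre
  · have h1 : -L.im = Real.sqrt (ρ / G) := by
      rw [hLim, Real.sqrt_div hρ.le]
      simp
    have := him.neg
    rw [← h1]
    refine Tendsto.congr (fun ω => ?_) this
    simp [neg_div]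
end
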